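/- arXiv:math/0508323 — 3 statements merged into one kernel-verified Lean document; each statement's English description precedes it below -/
import Mathlib

section
/- For all integers p and k there exists an integer N(p,k) such that every graph G with tree-width at most k has a p-centered coloring using at most N(p,k) colors. -/
open scoped Classical

universe u v

/-- A rooted forest given by its ancestor order: `le x y` means `x` is an ancestor of `y`
(or `x = y`); ancestors of any vertex form a chain. -/
structure RootedForest (V : Type u) where
  le : V → V → Prop
  le_refl : ∀ x, le x x
  le_antisymm : ∀ x y, le x y → le y x → x = y
  le_trans : ∀ x y z, le x y → le y z → le x z
  ancestors_chain : ∀ x y z, le x z → le y z → le x y ∨ le y x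

/-- The closure of a rooted forest: each vertex is joined to all its proper ancestors. -/
def RootedForest.clos {V : Type u} (F : RootedForest V) : SimpleGraph V where
  Adj x y := x ≠ y ∧ (F.le x y ∨ F.le y x)
  symm := by
    refine ⟨?_⟩
    rintro x y ⟨h1, h2⟩
    exact ⟨h1.symm, h2.symm⟩
  loopless := ⟨fun x h => h.1 rfl⟩

/-- The height of a rooted forest: maximum number of vertices on a root-to-vertex path. -/
noncomputable def RootedForest.height {V : Type u} [Fintype V] (F : RootedForest V) : ℕ :=
  Finset.univ.sup fun x => (Finset.univ.filter fun y => F.le y x).card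

/-- Tree-depth: minimum height of a rooted forest whose closure contains `G`. -/
noncomputable def treeDepth {V : Type u} [Fintype V] (G : SimpleGraph V) : ℕ :=
  sInf {n : ℕ | ∃ F : RootedForest V, G ≤ F.clos ∧ F.height ≤ n}

/-- `H` is a `k`-tree: there is a construction order in which every vertex is added
adjacent to a clique of size at most `k` among the earlier vertices. -/
def IsKTree {V : Type u} (k : ℕ) (H : SimpleGraph V) : Prop :=
  ∃ r : V → V → Prop, IsStrictTotalOrder V r ∧
    ∀ x : V, H.IsClique {y | r y x ∧ H.Adj y x} ∧ {y | r y x ∧ H.Adj y x}.ncard ≤ k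

/-- Tree-width: minimum `k` such that `G` is a subgraph of a `k`-tree. -/
noncomputable def treeWidth {V : Type u} [Fintype V] (G : SimpleGraph V) : ℕ :=
  sInf {k : ℕ | ∃ H : SimpleGraph V, G ≤ H ∧ IsKTree k H}

/-- A `p`-centered coloring: every connected subgraph either has a color appearing
exactly once, or receives at least `p` colors. -/
def IsCenteredColoring {V : Type u} {α : Type v} (p : ℕ) (G : SimpleGraph V)
    (c : V → α) : Prop :=
  ∀ S : Set V, (G.induce S).Connected →
    (∃ x ∈ S, ∀ y ∈ S, c y = c x → y = x) ∨ p ≤ (c '' S).ncard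

/-- A class of (finite) graphs. -/
def GraphClass : Type 1 := ∀ (V : Type) [Fintype V], SimpleGraph V → Prop

def HasLowTreeWidthColorings (C : GraphClass) : Prop :=
  ∀ p : ℕ, 1 ≤ p → ∃ N : ℕ, ∀ (V : Type) [Fintype V], ∀ G : SimpleGraph V, C V G →
    ∃ c : V → Fin N, ∀ I : Finset (Fin N), I.card ≤ p →
      ∀ K : (G.induce {v | c v ∈ I}).ConnectedComponent,
        treeWidth ((G.induce {v | c v ∈ I}).induce K.supp) ≤ I.card - 1

def HasLowTreeDepthColorings (C : GraphClass) : Prop :=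
  ∀ p : ℕ, 1 ≤ p → ∃ N : ℕ, ∀ (V : Type) [Fintype V], ∀ G : SimpleGraph V, C V G →
    ∃ c : V → Fin N, ∀ I : Finset (Fin N), I.card ≤ p →
      ∀ K : (G.induce {v | c v ∈ I}).ConnectedComponent,
        treeDepth ((G.induce {v | c v ∈ I}).induce K.supp) ≤ I.card

/-- `χ_p(G)`: minimum number of colors such that any `i < p` color classes induce a
subgraph of tree-depth at most `i`. -/
noncomputable def chiP {V : Type u} [Fintype V] (p : ℕ) (G : SimpleGraph V) : ℕ :=
  sInf {N : ℕ | ∃ c : V → Fin N, ∀ I : Finset (Fin N), I.card < p →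
    treeDepth (G.induce {v | c v ∈ I}) ≤ I.card}

/-- `H` is a minor of `G`: disjoint connected branch sets, one per vertex of `H`,
joined by edges of `G` as prescribed by the edges of `H`. -/
def IsMinorOf {W : Type v} {V : Type u} (H : SimpleGraph W) (G : SimpleGraph V) : Prop :=
  ∃ B : W → Set V, (∀ w, (G.induce (B w)).Connected) ∧
    (Pairwise fun w w' => Disjoint (B w) (B w')) ∧
    ∀ w w', H.Adj w w' → ∃ u ∈ B w, ∃ x ∈ B w', G.Adj u x

/-- The Hadwiger number: largest `n` with `K_n` a minor of `G`. -/
noncomputable def hadwiger {V : Type u} [Fintype V] (G : SimpleGraph V) : ℕ :=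
  sSup {n : ℕ | IsMinorOf (⊤ : SimpleGraph (Fin n)) G}

/-- The grad `∇(G)`: maximum of `|E(H)|/|V(H)|` over minors `H` of `G`. -/
noncomputable def gradMax {V : Type u} [Fintype V] (G : SimpleGraph V) : ℝ :=
  sSup {x : ℝ | ∃ (W : Type) (_ : Finite W) (H : SimpleGraph W),
    IsMinorOf H G ∧ x = (H.edgeSet.ncard : ℝ) / (Nat.card W : ℝ)}

/-- The quotient of `G` by a family of balls. -/
def quotientGraph {V : Type u} (G : SimpleGraph V) {p : ℕ} (B : Fin p → Set V) :
    SimpleGraph (Fin p) where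
  Adj i j := i ≠ j ∧ ((B i ∩ B j).Nonempty ∨ ∃ u ∈ B i, ∃ x ∈ B j, G.Adj u x)
  symm := by
    refine ⟨?_⟩
    rintro i j ⟨hij, h⟩
    refine ⟨hij.symm, ?_⟩
    rcases h with h | ⟨u, hu, x, hx, huv⟩
    · exact Or.inl (by rwa [Set.inter_comm])
    · exact Or.inr ⟨x, hx, u, hu, huv.symm⟩
  loopless := ⟨fun i h => h.1 rfl⟩

/-- A family of balls of radius at most `r` and complexity at most `c`. -/
def IsBallFamily {V : Type u} (G : SimpleGraph V) (r c : ℕ) {p : ℕ}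
    (B : Fin p → Set V) : Prop :=
  (∀ i, (G.induce (B i)).Connected ∧
    ∃ x : B i, ∀ y : B i, (G.induce (B i)).dist x y ≤ r) ∧
  ∀ v : V, ({i | v ∈ B i} : Set (Fin p)).ncard ≤ c

/-- The grad `∇^c_r(G)` of `G` with rank `r` and complexity `c`. -/
noncomputable def gradCR {V : Type u} [Fintype V] (c r : ℕ) (G : SimpleGraph V) : ℝ :=
  sSup {x : ℝ | ∃ (p : ℕ) (B : Fin p → Set V), IsBallFamily G r c B ∧
    x = ((quotientGraph G B).edgeSet.ncard : ℝ) / (p : ℝ)}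

/-- The grad `∇_r(G)` of `G` with rank `r`. -/
noncomputable def gradR {V : Type u} [Fintype V] (r : ℕ) (G : SimpleGraph V) : ℝ :=
  gradCR 1 r G

def HasBoundedExpansion (C : GraphClass) : Prop :=
  ∃ f : ℕ → ℝ, ∀ (V : Type) [Fintype V], ∀ G : SimpleGraph V, C V G →
    ∀ r : ℕ, gradR r G ≤ f r

/-- The lexicographic product of two graphs. -/
def lexProd {V : Type u} {W : Type v} (G : SimpleGraph V) (H : SimpleGraph W) :
    SimpleGraph (V × W) where
  Adj a b := G.Adj a.1 b.1 ∨ (a.1 = b.1 ∧ H.Adj a.2 b.2)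
  symm := by
    refine ⟨?_⟩
    rintro a b (h | ⟨h1, h2⟩)
    · exact Or.inl h.symm
    · exact Or.inr ⟨h1.symm, h2.symm⟩
  loopless := by
    refine ⟨?_⟩
    rintro a (h | ⟨h1, h2⟩)
    · exact G.loopless.irrefl a.1 h
    · exact H.loopless.irrefl a.2 h2

/-- A loopless directed graph with at most one arc in each direction between two vertices. -/
structure Digr (V : Type u) where
  Adj : V → V → Prop
  irrefl : ∀ x, ¬ Adj x x

/-- The underlying simple graph of a digraph. -/
def Digr.toSimple {V : Type u} (D : Digr V) : SimpleGraph V where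
  Adj x y := D.Adj x y ∨ D.Adj y x
  symm := ⟨fun x y h => h.symm⟩
  loopless := ⟨fun x h => h.elim (D.irrefl x) (D.irrefl x)⟩

/-- Maximum indegree of a set of arcs (a binary relation). -/
noncomputable def inDegMax {V : Type u} [Fintype V] (R : V → V → Prop) : ℕ :=
  Finset.univ.sup fun y => (Finset.univ.filter fun x => R x y).card

def listArcs {V : Type u} (l : List V) : List (V × V) := l.zip l.tail

def internalVerts {V : Type u} (l : List V) : List V := l.tail.dropLast

/-- `l` is (the vertex list of) a directed path in `D`. -/
def IsDiPath {V : Type u} (D : Digr V) (l : List V) : Prop :=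
  l ≠ [] ∧ l.Nodup ∧ l.Chain' D.Adj

/-- `l` is a directed path in `D` from `x` to `z`. -/
def DiPathBetween {V : Type u} (D : Digr V) (l : List V) (x z : V) : Prop :=
  IsDiPath D l ∧ l.head? = some x ∧ l.getLast? = some z

/-- No internal vertex or arc of one path belongs to the other. -/
def SeparatedPair {V : Type u} (l1 l2 : List V) : Prop :=
  (∀ v ∈ internalVerts l1, v ∉ l2) ∧ (∀ v ∈ internalVerts l2, v ∉ l1) ∧
  ∀ e ∈ listArcs l1, e ∉ listArcs l2

/-- `y` is `(a,b)`-reachable from `x` in `D`. -/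
def ABReachable {V : Type u} (D : Digr V) (a b : ℕ) (x y : V) : Prop :=
  x ≠ y ∧ ∃ (z : V) (l1 l2 : List V),
    DiPathBetween D l1 x z ∧ DiPathBetween D l2 y z ∧
    l1.length ≤ a + 1 ∧ l2.length ≤ b + 1 ∧ SeparatedPair l1 l2

/-- `L` is an `(a,b)`-augmentation of `D`. -/
def IsAugmentation {V : Type u} (D : Digr V) (a b : ℕ) (L : V → V → Prop) : Prop :=
  ∀ x y, ABReachable D a b x y → L x y ∨ L y x

/-- `H` is a `1`-transitive fraternal augmentation of `D`. -/
def IsOneTFA {V : Type u} (D H : Digr V) : Prop :=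
  (∀ x y, D.Adj x y → H.Adj x y) ∧
  (∀ x y z, x ≠ y → D.Adj x z → D.Adj z y → H.Adj x y) ∧
  (∀ x y z, x ≠ y → D.Adj x z → D.Adj y z → H.Adj x y ∨ H.Adj y x)

/-- `Gs` (indexed from `1`) is a transitive fraternal augmentation of `D`. -/
def IsTFASeq {V : Type u} (D : Digr V) (Gs : ℕ → Digr V) : Prop :=
  Gs 1 = D ∧ ∀ i, 1 ≤ i → IsOneTFA (Gs i) (Gs (i + 1))

/-- `D` is an orientation of the graph `G`. -/
def IsOrientationOf {V : Type u} (D : Digr V) (G : SimpleGraph V) : Prop :=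
  (∀ x y, D.Adj x y → ¬ D.Adj y x) ∧ D.toSimple = G

/-- An acyclically oriented clique of size `p` in a digraph. -/
def AcyclicOrientedClique {V : Type u} (H : Digr V) (S : Set V) (p : ℕ) : Prop :=
  S.ncard = p ∧ (∀ x ∈ S, ∀ y ∈ S, x ≠ y → H.Adj x y ∨ H.Adj y x) ∧
  ∀ x : V, ¬ Relation.TransGen (fun a b => a ∈ S ∧ b ∈ S ∧ H.Adj a b) x x

set_option linter.unusedSectionVars false

namespace Stmt3Proof

variable {V : Type} [Fintype V]

/-- `w 0, w 1, ..., w m` is a `Q`-path. -/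
def IPath (Q : V → V → Prop) (w : ℕ → V) (m : ℕ) : Prop := ∀ i, i < m → Q (w i) (w (i+1))

lemma transGen_path {Q : V → V → Prop} {z x : V} (h : Relation.TransGen Q z x) :
    ∃ (w : ℕ → V) (m : ℕ), 1 ≤ m ∧ w 0 = z ∧ w m = x ∧ IPath Q w m := by
  induction h with
  | @single b hzb =>
    refine ⟨fun i => if i = 0 then z else b, 1, le_refl 1, by simp, by simp, ?_⟩
    intro i hi
    interval_cases i
    simpa using hzb
  | @tail b c hzb hbc ih =>
    obtain ⟨w, m, hm, h0, hme, hp⟩ := ih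
    refine ⟨fun i => if i ≤ m then w i else c, m + 1, by omega, ?_, ?_, ?_⟩
    · simpa using h0
    · simp
    · intro i hi
      rcases lt_or_eq_of_le (Nat.lt_succ_iff.mp hi) with hlt | heq
      · have h1 : i ≤ m := by omega
        have h2 : i + 1 ≤ m := by omega
        simpa [h1, h2] using hp i hlt
      · subst heq
        have h1 : i ≤ i := le_refl i
        have h2 : ¬ (i + 1 ≤ i) := by omega
        simpa [h1, h2, hme] using hbc

lemma path_transGen {Q : V → V → Prop} {w : ℕ → V} {m : ℕ} (hp : IPath Q w m) :
    ∀ (d a : ℕ), 0 < d → a + d ≤ m → Relation.TransGen Q (w a) (w (a + d)) := by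
  intro d
  induction d with
  | zero => omega
  | succ d ih =>
    intro a hd ham
    rcases Nat.eq_zero_or_pos d with h0 | h0
    · subst h0
      exact Relation.TransGen.single (hp a (by omega))
    · have h1 : Relation.TransGen Q (w (a+1)) (w (a + 1 + d)) := ih (a+1) h0 (by omega)
      have h2 : a + 1 + d = a + (d + 1) := by omega
      rw [h2] at h1
      exact Relation.TransGen.head (hp a (by omega)) h1

lemma path_reflTransGen {Q : V → V → Prop} {w : ℕ → V} {m : ℕ} (hp : IPath Q w m) :
    ∀ i, i ≤ m → Relation.ReflTransGen Q (w 0) (w i) := by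
  intro i
  induction i with
  | zero => intro _; exact Relation.ReflTransGen.refl
  | succ i ih =>
    intro hi
    exact Relation.ReflTransGen.tail (ih (by omega)) (hp i (by omega))

/-- one parent-step down -/
def pstep (P : V → Set V) (a b : V) : Prop := b ∈ P a

/-- iterated-parents closure -/
def clR (P : V → Set V) : V → V → Prop := Relation.ReflTransGen (pstep P)

/-- (C1) everything in the closure is below. -/
lemma clR_le {r : V → V → Prop} {P : V → Set V}
    (htr : ∀ a b c : V, r a b → r b c → r a c)
    (hPr : ∀ u v : V, u ∈ P v → r u v) {v y : V} (h : clR P v y) : y = v ∨ r y v := by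
  induction h with
  | refl => exact Or.inl rfl
  | tail hab hbc ih =>
    right
    have h1 : r _ _ := hPr _ _ hbc
    rcases ih with h2 | h2
    · rwa [h2] at h1
    · exact htr _ _ _ h1 h2

/-- (C2') closure sets are chains. -/
lemma clR_chain {r : V → V → Prop} {P : V → Set V}
    (htr : ∀ a b c : V, r a b → r b c → r a c) (hir : ∀ a : V, ¬ r a a)
    (htri : ∀ a b : V, r a b ∨ a = b ∨ r b a)
    (hPr : ∀ u v : V, u ∈ P v → r u v)
    (hPP : ∀ u w v : V, u ∈ P v → w ∈ P v → r u w → u ∈ P w)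
    (hwf : WellFounded r) :
    ∀ z u w : V, clR P z u → clR P z w → r u w → clR P w u := by
  intro z
  induction z using hwf.induction with
  | _ z ih =>
    intro u w hzu hzw huw
    rcases Relation.ReflTransGen.cases_head hzu with rfl | ⟨bu, hbu, hbuu⟩
    · rcases clR_le htr hPr hzw with rfl | h2
      · exact absurd huw (hir _)
      · exact absurd (htr _ _ _ huw h2) (hir _)
    · rcases Relation.ReflTransGen.cases_head hzw with rfl | ⟨bw, hbw, hbww⟩
      · exact hzu
      · rcases htri bu bw with h | h | h
        · have h1 : clR P bw u := Relation.ReflTransGen.head (hPP _ _ _ hbu hbw h) hbuu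
          exact ih bw (hPr _ _ hbw) u w h1 hbww huw
        · subst h
          exact ih bu (hPr _ _ hbu) u w hbuu hbww huw
        · have h1 : clR P bu w := Relation.ReflTransGen.head (hPP _ _ _ hbw hbu h) hbww
          exact ih bu (hPr _ _ hbu) u w hbuu h1 huw

/-- (F2) descent: parents below a closure element are its parents. -/
lemma descent {r : V → V → Prop} {P : V → Set V}
    (htr : ∀ a b c : V, r a b → r b c → r a c) (hir : ∀ a : V, ¬ r a a)
    (htri : ∀ a b : V, r a b ∨ a = b ∨ r b a)
    (hPr : ∀ u v : V, u ∈ P v → r u v)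
    (hPP : ∀ u w v : V, u ∈ P v → w ∈ P v → r u w → u ∈ P w)
    (hwf : WellFounded r) :
    ∀ v y u : V, clR P v y → u ∈ P v → r u y → u ∈ P y := by
  intro v
  induction v using hwf.induction with
  | _ v ih =>
    intro y u hvy huv huy
    rcases Relation.ReflTransGen.cases_head hvy with rfl | ⟨b, hb, hby⟩
    · exact huv
    · rcases htri u b with h | h | h
      · exact ih b (hPr _ _ hb) y u hby (hPP _ _ _ huv hb h) huy
      · subst h
        rcases clR_le htr hPr hby with rfl | h2
        · exact absurd huy (hir _)
        · exact absurd (htr _ _ _ huy h2) (hir _)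
      · rcases clR_le htr hPr hby with rfl | h2
        · exact absurd (htr _ _ _ huy h) (hir _)
        · exact absurd (htr _ _ _ huy (htr _ _ _ h2 h)) (hir _)


/-! ### Finite iterated-parent sets and the greedy coloring -/

noncomputable def Pf (P : V → Set V) (v : V) : Finset V := (Set.toFinite (P v)).toFinset

lemma mem_Pf {P : V → Set V} {u v : V} : u ∈ Pf P v ↔ u ∈ P v := Set.Finite.mem_toFinset _

noncomputable def sjF (P : V → Set V) : ℕ → V → Finset V
  | 0, v => {v}
  | (j+1), v => (Pf P v).biUnion (fun m => sjF P j m)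

lemma sjF_card {P : V → Set V} {k : ℕ} (hk : ∀ v, (P v).ncard ≤ k) :
    ∀ (j : ℕ) (v : V), (sjF P j v).card ≤ k ^ j := by
  intro j
  induction j with
  | zero => intro v; simp [sjF]
  | succ j ih =>
    intro v
    calc (sjF P (j+1) v).card ≤ ∑ m ∈ Pf P v, (sjF P j m).card := Finset.card_biUnion_le
    _ ≤ ∑ _m ∈ Pf P v, k ^ j := Finset.sum_le_sum (fun m _ => ih m)
    _ = (Pf P v).card * k ^ j := by rw [Finset.sum_const, smul_eq_mul]
    _ ≤ k * k ^ j := by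
        have : (Pf P v).card ≤ k := by
          have := hk v
          rwa [Set.ncard_eq_toFinset_card (P v) (Set.toFinite (P v))] at this
        exact Nat.mul_le_mul_right _ this
    _ = k ^ (j+1) := by ring

lemma sjF_zero {P : V → Set V} {u v : V} : u ∈ sjF P 0 v ↔ u = v := by simp [sjF]

lemma sjF_succ {P : V → Set V} {u v : V} {j : ℕ} :
    u ∈ sjF P (j+1) v ↔ ∃ m ∈ Pf P v, u ∈ sjF P j m := by simp [sjF]

lemma sjF_r {r : V → V → Prop} {P : V → Set V}
    (htr : ∀ a b c : V, r a b → r b c → r a c)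
    (hPr : ∀ u v : V, u ∈ P v → r u v) :
    ∀ (j : ℕ) (v u : V), 1 ≤ j → u ∈ sjF P j v → r u v := by
  intro j
  induction j with
  | zero => omega
  | succ j ih =>
    intro v u _ hu
    rcases sjF_succ.mp hu with ⟨m, hm, hum⟩
    have hmv : r m v := hPr _ _ (mem_Pf.mp hm)
    rcases Nat.eq_zero_or_pos j with h0 | h0
    · subst h0
      rcases sjF_zero.mp hum with rfl
      exact hmv
    · exact htr _ _ _ (ih m u h0 hum) hmv

lemma sjF_comp {P : V → Set V} :
    ∀ (j i : ℕ) (v u x : V), u ∈ sjF P j v → x ∈ sjF P i u → x ∈ sjF P (j + i) v := by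
  intro j
  induction j with
  | zero =>
    intro i v u x hu hx
    rcases sjF_zero.mp hu with rfl
    simpa using hx
  | succ j ih =>
    intro i v u x hu hx
    rcases sjF_succ.mp hu with ⟨m, hm, hum⟩
    have : x ∈ sjF P (j + i) m := ih i m u x hum hx
    have hj : j + 1 + i = (j + i) + 1 := by omega
    rw [hj]
    exact sjF_succ.mpr ⟨m, hm, this⟩

/-- the ≤ (p-1)-step strict descendants-by-parents -/
noncomputable def RhF (P : V → Set V) (p : ℕ) (v : V) : Finset V :=
  (Finset.Icc 1 (p-1)).biUnion (fun j => sjF P j v)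

def Bnd (p k : ℕ) : ℕ := ∑ j ∈ Finset.Icc 1 (p-1), k ^ j

lemma RhF_card {P : V → Set V} {p k : ℕ} (hk : ∀ v, (P v).ncard ≤ k) (v : V) :
    (RhF P p v).card ≤ Bnd p k := by
  calc (RhF P p v).card ≤ ∑ j ∈ Finset.Icc 1 (p-1), (sjF P j v).card := Finset.card_biUnion_le
  _ ≤ ∑ j ∈ Finset.Icc 1 (p-1), k ^ j := Finset.sum_le_sum (fun j _ => sjF_card hk j v)

lemma RhF_r {r : V → V → Prop} {P : V → Set V}
    (htr : ∀ a b c : V, r a b → r b c → r a c)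
    (hPr : ∀ u v : V, u ∈ P v → r u v) {p : ℕ} {v u : V} (hu : u ∈ RhF P p v) : r u v := by
  rcases Finset.mem_biUnion.mp hu with ⟨j, hj, hju⟩
  exact sjF_r htr hPr j v u (Finset.mem_Icc.mp hj).1 hju

lemma mem_RhF {P : V → Set V} {p : ℕ} {v u : V} {j : ℕ} (h1 : 1 ≤ j) (h2 : j ≤ p - 1)
    (h : u ∈ sjF P j v) : u ∈ RhF P p v :=
  Finset.mem_biUnion.mpr ⟨j, Finset.mem_Icc.mpr ⟨h1, h2⟩, h⟩

noncomputable def pickFresh {n : ℕ} (s : Finset (Fin (n+1))) : Fin (n+1) :=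
  if h : (Finset.univ \ s).Nonempty then (Finset.univ \ s).min' h else ⟨0, Nat.succ_pos n⟩

lemma pickFresh_not_mem {n : ℕ} {s : Finset (Fin (n+1))} (h : s.card ≤ n) : pickFresh s ∉ s := by
  have hne : (Finset.univ \ s).Nonempty := by
    rw [Finset.sdiff_nonempty]
    intro hsub
    have := Finset.card_le_card hsub
    simp only [Finset.card_univ, Fintype.card_fin] at this
    omega
  have hmem := Finset.min'_mem _ hne
  rw [pickFresh, dif_pos hne]
  exact fun hc => (Finset.mem_sdiff.mp hmem).2 hc

/-- the greedy coloring, proper on `RhF`. -/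
noncomputable def gcol {r : V → V → Prop} (P : V → Set V) (p k : ℕ) (hwf : WellFounded r)
    (hdesc : ∀ v u : V, u ∈ RhF P p v → r u v) : V → Fin (Bnd p k + 1) :=
  hwf.fix (fun v ih => pickFresh ((RhF P p v).attach.image (fun u => ih u.1 (hdesc v u.1 u.2))))

lemma gcol_ne {r : V → V → Prop} {P : V → Set V} {p k : ℕ} {hwf : WellFounded r}
    {hdesc : ∀ v u : V, u ∈ RhF P p v → r u v} (hk : ∀ v, (P v).ncard ≤ k)
    {u v : V} (hu : u ∈ RhF P p v) :
    gcol P p k hwf hdesc u ≠ gcol P p k hwf hdesc v := by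
  have heq : gcol P p k hwf hdesc v =
      pickFresh ((RhF P p v).attach.image (fun u => gcol P p k hwf hdesc u.1)) := by
    rw [gcol, WellFounded.fix_eq]
  have hcard : ((RhF P p v).attach.image
      (fun u : {x // x ∈ RhF P p v} => gcol P p k hwf hdesc u.1)).card ≤ Bnd p k := by
    calc _ ≤ (RhF P p v).attach.card := Finset.card_image_le
    _ = (RhF P p v).card := Finset.card_attach
    _ ≤ Bnd p k := RhF_card hk v
  have hnm := pickFresh_not_mem hcard
  rw [← heq] at hnm
  intro hc
  apply hnm
  rw [← hc]
  exact Finset.mem_image.mpr ⟨⟨u, hu⟩, Finset.mem_attach _ _, rfl⟩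

/-! ### The reachability relation inside a set of colors -/

section Rel

variable {r : V → V → Prop} {P : V → Set V} {p k : ℕ}

/-- one parent-step staying inside the color classes `J`. -/
def StepC (P : V → Set V) {n : ℕ} (c : V → Fin n) (J : Finset (Fin n)) (a b : V) : Prop :=
  b ∈ P a ∧ c a ∈ J ∧ c b ∈ J

def RelC (P : V → Set V) {n : ℕ} (c : V → Fin n) (J : Finset (Fin n)) : V → V → Prop :=
  Relation.TransGen (StepC P c J)

lemma relC_r (htr : ∀ a b c : V, r a b → r b c → r a c)
    (hPr : ∀ u v : V, u ∈ P v → r u v) {n : ℕ} {c : V → Fin n} {J : Finset (Fin n)}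
    {v u : V} (h : RelC P c J v u) : r u v := by
  induction h with
  | single h1 => exact hPr _ _ h1.1
  | tail _ h2 ih => exact htr _ _ _ (hPr _ _ h2.1) ih

lemma relC_colors {n : ℕ} {c : V → Fin n} {J : Finset (Fin n)}
    {v u : V} (h : RelC P c J v u) : c v ∈ J ∧ c u ∈ J := by
  induction h with
  | single h1 => exact ⟨h1.2.1, h1.2.2⟩
  | tail _ h2 ih => exact ⟨ih.1, h2.2.2⟩

lemma relC_clR {n : ℕ} {c : V → Fin n} {J : Finset (Fin n)}
    {v u : V} (h : RelC P c J v u) : clR P v u := by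
  have := Relation.TransGen.to_reflTransGen h
  exact Relation.ReflTransGen.mono (fun a b (hab : StepC P c J a b) => (hab.1 : pstep P a b)) _ _ this

lemma path_colors {n : ℕ} {c : V → Fin n} {J : Finset (Fin n)} {w : ℕ → V} {m : ℕ}
    (hp : IPath (StepC P c J) w m) (hm : 1 ≤ m) : ∀ i, i ≤ m → c (w i) ∈ J := by
  intro i hi
  rcases lt_or_eq_of_le hi with h | h
  · exact (hp i h).2.1
  · subst h
    have h2 := (hp (i-1) (by omega)).2.2
    have hieq : i - 1 + 1 = i := by omega
    rwa [hieq] at h2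

lemma path_sjF {n : ℕ} {c : V → Fin n} {J : Finset (Fin n)} {w : ℕ → V} {m : ℕ}
    (hp : IPath (StepC P c J) w m) :
    ∀ (d a : ℕ), a + d ≤ m → w (a + d) ∈ sjF P d (w a) := by
  intro d
  induction d with
  | zero => intro a _; simpa using sjF_zero.mpr rfl
  | succ d ih =>
    intro a ham
    have h1 : w (a+1) ∈ Pf P (w a) := mem_Pf.mpr (hp a (by omega)).1
    have h2 : w (a + 1 + d) ∈ sjF P d (w (a+1)) := ih (a+1) (by omega)
    have h3 : a + (d+1) = a + 1 + d := by omega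
    rw [h3]
    exact sjF_succ.mpr ⟨w (a+1), h1, h2⟩

/-- key: inside at most `p-1` color classes, parent-paths are short. -/
lemma path_short {hwf : WellFounded r} {hdesc : ∀ v u : V, u ∈ RhF P p v → r u v}
    (hk : ∀ v, (P v).ncard ≤ k) (hp2 : 2 ≤ p)
    {J : Finset (Fin (Bnd p k + 1))} (hJ : J.card ≤ p - 1) {w : ℕ → V} {m : ℕ}
    (hpath : IPath (StepC P (gcol P p k hwf hdesc) J) w m) : m ≤ p - 2 := by
  by_contra hcon
  have hm : p - 1 ≤ m := by omega
  set c := gcol P p k hwf hdesc with hc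
  have hinj : Function.Injective (fun i : Fin p => c (w i.1)) := by
    intro i i' hEq
    by_contra hne
    have hne' : i.1 ≠ i'.1 := fun hc' => hne (Fin.ext hc')
    rcases Nat.lt_or_ge i.1 i'.1 with hlt | hge
    · have hmem : w i'.1 ∈ sjF P (i'.1 - i.1) (w i.1) := by
        have := path_sjF hpath (i'.1 - i.1) i.1 (by omega)
        have heq2 : i.1 + (i'.1 - i.1) = i'.1 := by omega
        rwa [heq2] at this
      have hRh : w i'.1 ∈ RhF P p (w i.1) := mem_RhF (by omega) (by omega) hmem
      exact gcol_ne hk hRh hEq.symm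
    · have hlt : i'.1 < i.1 := by omega
      have hmem : w i.1 ∈ sjF P (i.1 - i'.1) (w i'.1) := by
        have := path_sjF hpath (i.1 - i'.1) i'.1 (by omega)
        have heq2 : i'.1 + (i.1 - i'.1) = i.1 := by omega
        rwa [heq2] at this
      have hRh : w i.1 ∈ RhF P p (w i'.1) := mem_RhF (by omega) (by omega) hmem
      exact gcol_ne hk hRh hEq
  have hmemJ : ∀ i : Fin p, c (w i.1) ∈ J := by
    intro i
    exact path_colors hpath (by omega) i.1 (by omega)
  have hinj2 : Function.Injective (fun i : Fin p => (⟨c (w i.1), hmemJ i⟩ : {x // x ∈ J})) := by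
    intro i i' h
    exact hinj (congrArg Subtype.val h)
  have := Fintype.card_le_of_injective _ hinj2
  simp only [Fintype.card_coe, Fintype.card_fin] at this
  omega

/-- any `RelC`-reachable vertex is within `p-1` parent-steps. -/
lemma relC_RhF {hwf : WellFounded r} {hdesc : ∀ v u : V, u ∈ RhF P p v → r u v}
    (hk : ∀ v, (P v).ncard ≤ k) (hp2 : 2 ≤ p)
    {J : Finset (Fin (Bnd p k + 1))} (hJ : J.card ≤ p - 1) {v u : V}
    (h : RelC P (gcol P p k hwf hdesc) J v u) : u ∈ RhF P p v := by
  obtain ⟨w, m, hm, h0, hme, hpath⟩ := transGen_path h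
  have hshort : m ≤ p - 2 := path_short hk hp2 hJ hpath
  have := path_sjF hpath m 0 (by omega)
  rw [h0] at this
  simp only [Nat.zero_add] at this
  rw [hme] at this
  exact mem_RhF hm (by omega) this

/-- (‡) two vertices reachable from a common vertex are comparable. -/
lemma tst (htr : ∀ a b c : V, r a b → r b c → r a c) (hir : ∀ a : V, ¬ r a a)
    (htri : ∀ a b : V, r a b ∨ a = b ∨ r b a)
    (hPr : ∀ u v : V, u ∈ P v → r u v)
    (hPP : ∀ u w v : V, u ∈ P v → w ∈ P v → r u w → u ∈ P w)
    (hwf : WellFounded r)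
    {n : ℕ} {c : V → Fin n} {J : Finset (Fin n)} {z x y : V}
    (hzx : RelC P c J z x) (hzy : RelC P c J z y) (hxy : r x y) : RelC P c J y x := by
  obtain ⟨w, m, hm, h0, hme, hpath⟩ := transGen_path hzx
  have hyz : r y z := relC_r htr hPr hzy
  have hPm : r (w m) y := by rw [hme]; exact hxy
  have hex : ∃ j, r (w j) y := ⟨m, hPm⟩
  set j0 := Nat.find hex with hj0def
  have hj0 : r (w j0) y := Nat.find_spec hex
  have hj0m : j0 ≤ m := Nat.find_min' hex hPm
  have hj0pos : 1 ≤ j0 := by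
    rcases Nat.eq_zero_or_pos j0 with h00 | h00
    · exfalso
      have := hj0
      rw [h00, h0] at this
      exact hir z (htr _ _ _ this hyz)
    · exact h00
  set i := j0 - 1 with hidef
  have hi1 : i + 1 = j0 := by omega
  have him : i < m := by omega
  have hnPi : ¬ r (w i) y := Nat.find_min hex (by omega)
  have hstepi := hpath i him
  rcases htri (w i) y with hcas | hcas | hcas
  · exact absurd hcas hnPi
  · -- w i = y : take the suffix of the path
    have := path_transGen hpath (m - i) i (by omega) (by omega)
    have heq2 : i + (m - i) = m := by omega
    rw [heq2, hme, hcas] at this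
    exact this
  · -- r y (w i) : y lies strictly between on the chain; use descent
    have hpathP : IPath (pstep P) w m := fun a ha => (hpath a ha).1
    have hclzwi : clR P z (w i) := by
      have := path_reflTransGen hpathP i (by omega)
      rwa [h0] at this
    have hclzy : clR P z y := relC_clR hzy
    have hclwiy : clR P (w i) y :=
      clR_chain htr hir htri hPr hPP hwf z y (w i) hclzy hclzwi hcas
    have hPmem : w (i+1) ∈ P y := by
      refine descent htr hir htri hPr hPP hwf (w i) y (w (i+1)) hclwiy hstepi.1 ?_
      rw [hi1]; exact hj0
    have hcy : c y ∈ J := (relC_colors hzy).2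
    have hcwj0 : c (w (i+1)) ∈ J := by
      rw [hi1]
      exact path_colors hpath hm j0 hj0m
    have hstep' : StepC P c J y (w (i+1)) := ⟨hPmem, hcy, hcwj0⟩
    rcases lt_or_eq_of_le hj0m with hlt | heqm
    · have htail := path_transGen hpath (m - j0) j0 (by omega) (by omega)
      have heq2 : j0 + (m - j0) = m := by omega
      rw [heq2, hme] at htail
      rw [hi1] at hstep'
      exact Relation.TransGen.head hstep' htail
    · rw [hi1, heqm, hme] at hstep'
      exact Relation.TransGen.single hstep'

/-- reach-depth inside the classes `J`. -/
noncomputable def dC (P : V → Set V) {n : ℕ} (c : V → Fin n) (J : Finset (Fin n)) (v : V) : ℕ :=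
  {u | RelC P c J v u}.ncard

lemma dC_lt (htr : ∀ a b c : V, r a b → r b c → r a c) (hir : ∀ a : V, ¬ r a a)
    (hPr : ∀ u v : V, u ∈ P v → r u v)
    {n : ℕ} {c : V → Fin n} {J : Finset (Fin n)} {x z : V}
    (h : RelC P c J x z) : dC P c J z < dC P c J x := by
  apply Set.ncard_lt_ncard _ (Set.toFinite _)
  have h1 : {u | RelC P c J x u} ⊆ {u | RelC P c J z u} → False := by
    intro hsub
    exact hir z (relC_r htr hPr (hsub h))
  exact ⟨fun u hu => h.trans hu, h1⟩

lemma dC_le {hwf : WellFounded r} {hdesc : ∀ v u : V, u ∈ RhF P p v → r u v}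
    (hk : ∀ v, (P v).ncard ≤ k) (hp2 : 2 ≤ p)
    {J : Finset (Fin (Bnd p k + 1))} (hJ : J.card ≤ p - 1) (v : V) :
    dC P (gcol P p k hwf hdesc) J v ≤ Bnd p k := by
  have hsub : {u | RelC P (gcol P p k hwf hdesc) J v u} ⊆ ↑(RhF P p v) :=
    fun u hu => relC_RhF hk hp2 hJ hu
  calc dC P (gcol P p k hwf hdesc) J v ≤ (↑(RhF P p v) : Set V).ncard :=
        Set.ncard_le_ncard hsub (Set.toFinite _)
  _ = (RhF P p v).card := Set.ncard_coe_finset _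
  _ ≤ Bnd p k := RhF_card hk v

end Rel


/-- color type for the final coloring -/
abbrev ColorT (p k : ℕ) : Type :=
  Fin (Bnd p k + 1) × (Finset (Fin (Bnd p k + 1)) → Fin (Bnd p k + 1))

theorem aux {V : Type} [Fintype V] (p k : ℕ) (H : SimpleGraph V) (hKT : IsKTree k H)
    (G : SimpleGraph V) (hGH : G ≤ H) :
    ∃ c : V → ColorT p k, IsCenteredColoring p G c := by
  classical
  obtain ⟨r, hsto, hx⟩ := hKT
  set P : V → Set V := fun v => {y | r y v ∧ H.Adj y v} with hPdef
  have htr : ∀ a b c : V, r a b → r b c → r a c := fun a b c h1 h2 =>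
    hsto.toIsStrictOrder.toIsTrans.trans a b c h1 h2
  have hir : ∀ a : V, ¬ r a a := fun a => hsto.toIsStrictOrder.toIrrefl.irrefl a
  have htri : ∀ a b : V, r a b ∨ a = b ∨ r b a := fun a b =>
    @trichotomous_of V r hsto.toTrichotomous a b
  have hPr : ∀ u v : V, u ∈ P v → r u v := fun u v h => h.1
  have hPP : ∀ u w v : V, u ∈ P v → w ∈ P v → r u w → u ∈ P w := by
    intro u w v hu hw huw
    have hne : u ≠ w := by
      intro h; subst h; exact hir u huw
    have hadj : H.Adj u w := (hx v).1 hu hw hne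
    exact ⟨huw, hadj⟩
  have hk : ∀ v, (P v).ncard ≤ k := fun v => (hx v).2
  have hwf : WellFounded r := by
    haveI := hsto
    exact Finite.wellFounded_of_trans_of_irrefl r
  have hdesc : ∀ v u : V, u ∈ RhF P p v → r u v := fun v u hu => RhF_r htr hPr hu
  set c0 := gcol P p k hwf hdesc with hc0
  refine ⟨fun v => ((c0 v, fun J => (⟨min (dC P c0 J v) (Bnd p k),
    Nat.lt_succ_of_le (min_le_right _ _)⟩ : Fin (Bnd p k + 1))) : ColorT p k), ?_⟩
  set cF : V → ColorT p k := fun v => (c0 v, fun J => ⟨min (dC P c0 J v) (Bnd p k),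
    Nat.lt_succ_of_le (min_le_right _ _)⟩) with hcF
  intro S hconn
  by_cases hp : p ≤ (cF '' S).ncard
  · exact Or.inr hp
  left
  push_neg at hp
  obtain ⟨⟨t0, ht0⟩⟩ := hconn.nonempty
  have hfin : (cF '' S).Finite := Set.toFinite _
  have h1le : 1 ≤ (cF '' S).ncard := by
    have : cF t0 ∈ cF '' S := Set.mem_image_of_mem cF ht0
    have hpos : (cF '' S).Nonempty := ⟨_, this⟩
    exact (Set.ncard_pos hfin).mpr hpos
  have hp2 : 2 ≤ p := by omega
  set I0 : Finset (Fin (Bnd p k + 1)) := (Set.toFinite (c0 '' S)).toFinset with hI0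
  have hI0mem : ∀ y ∈ S, c0 y ∈ I0 := fun y hy =>
    (Set.Finite.mem_toFinset _).mpr ⟨y, hy, rfl⟩
  have hI0card : I0.card ≤ p - 1 := by
    have h1 : (c0 '' S) = Prod.fst '' (cF '' S) := by
      rw [← Set.image_comp]; rfl
    have h2 : (c0 '' S).ncard ≤ (cF '' S).ncard := by
      rw [h1]; exact Set.ncard_image_le hfin
    have h3 : I0.card = (c0 '' S).ncard :=
      (Set.ncard_eq_toFinset_card _ _).symm
    omega
  obtain ⟨x, hxS, hxmin⟩ := Set.exists_min_image S (dC P c0 I0) (Set.toFinite S) ⟨t0, ht0⟩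
  have hstep : ∀ a b : V, a ∈ S → b ∈ S → G.Adj a b →
      (a = x ∨ RelC P c0 I0 a x) → (b = x ∨ RelC P c0 I0 b x) := by
    intro a b haS hbS hadj hInva
    have hH : H.Adj a b := hGH hadj
    have hne : a ≠ b := hH.ne
    rcases htri a b with hab | hab | hab
    · -- r a b : a ∈ P b
      have hPa : a ∈ P b := ⟨hab, hH⟩
      have hRba : RelC P c0 I0 b a :=
        Relation.TransGen.single ⟨hPa, hI0mem b hbS, hI0mem a haS⟩
      rcases hInva with rfl | hax
      · exact Or.inr hRba
      · exact Or.inr (hRba.trans hax)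
    · exact absurd hab hne
    · -- r b a : b ∈ P a
      have hPb : b ∈ P a := ⟨hab, hH.symm⟩
      have hRab : RelC P c0 I0 a b :=
        Relation.TransGen.single ⟨hPb, hI0mem a haS, hI0mem b hbS⟩
      rcases hInva with rfl | hax
      · exfalso
        have := dC_lt htr hir hPr hRab
        have := hxmin b hbS
        omega
      · rcases htri x b with hxb | hxb | hxb
        · exact Or.inr (tst htr hir htri hPr hPP hwf hax hRab hxb)
        · exact Or.inl hxb.symm
        · exfalso
          have hxbRel := tst htr hir htri hPr hPP hwf hRab hax hxb
          have := dC_lt htr hir hPr hxbRel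
          have := hxmin b hbS
          omega
  have hreach : ∀ y ∈ S, y = x ∨ RelC P c0 I0 y x := by
    intro y hyS
    obtain ⟨wlk⟩ := hconn.preconnected ⟨x, hxS⟩ ⟨y, hyS⟩
    have main : ∀ (a b : ↥S), (G.induce S).Walk a b →
        (a.1 = x ∨ RelC P c0 I0 a.1 x) → (b.1 = x ∨ RelC P c0 I0 b.1 x) := by
      intro a b wk
      induction wk with
      | nil => exact id
      | cons h pth ih =>
        intro hInva
        exact ih (hstep _ _ (Subtype.mem _) (Subtype.mem _) (SimpleGraph.comap_adj.mp h) hInva)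
    exact main ⟨x, hxS⟩ ⟨y, hyS⟩ wlk (Or.inl rfl)
  refine ⟨x, hxS, ?_⟩
  intro y hyS heq
  by_contra hne
  rcases hreach y hyS with rfl | hRyx
  · exact hne rfl
  · have hlt : dC P c0 I0 x < dC P c0 I0 y := dC_lt htr hir hPr hRyx
    have hbx : dC P c0 I0 x ≤ Bnd p k := by
      have := dC_le (hwf := hwf) (hdesc := hdesc) hk hp2 hI0card x
      rwa [← hc0] at this
    have hby : dC P c0 I0 y ≤ Bnd p k := by
      have := dC_le (hwf := hwf) (hdesc := hdesc) hk hp2 hI0card y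
      rwa [← hc0] at this
    have h2 := congrArg Prod.snd heq
    have h3 := congrFun h2 I0
    have h4 : min (dC P c0 I0 y) (Bnd p k) = min (dC P c0 I0 x) (Bnd p k) :=
      congrArg Fin.val h3
    rw [min_eq_left hby, min_eq_left hbx] at h4
    omega

end Stmt3Proof

/-- Graphs of tree-width at most `k` have `p`-centered colorings with a bounded
number of colors. -/
theorem stmt3 (p k : ℕ) :
    ∃ N : ℕ, ∀ (V : Type) [Fintype V], ∀ G : SimpleGraph V, treeWidth G ≤ k →
      ∃ c : V → Fin N, IsCenteredColoring p G c := by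
  classical
  refine ⟨Fintype.card (Stmt3Proof.ColorT p k), ?_⟩
  intro V _ G htw
  have hne : {k' : ℕ | ∃ H : SimpleGraph V, G ≤ H ∧ IsKTree k' H}.Nonempty := by
    refine ⟨Nat.card V, ⊤, le_top, ?_⟩
    set e := Fintype.equivFin V with he
    refine ⟨fun a b => e a < e b, ?_, ?_⟩
    · haveI h1 : IsTrichotomous V (fun a b => e a < e b) := by
        constructor
        intro a b hab hba
        rcases lt_trichotomy (e a) (e b) with h | h | h
        · exact absurd h hab
        · exact e.injective h
        · exact absurd h hba
      haveI h2 : IsTrans V (fun a b => e a < e b) := by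
        constructor
        intro a b c hab hbc
        exact lt_trans hab hbc
      haveI h3 : IsIrrefl V (fun a b => e a < e b) := by
        constructor
        intro a h
        exact lt_irrefl _ h
      haveI h4 : IsStrictOrder V (fun a b => e a < e b) := ⟨⟩
      exact ⟨⟩
    · intro x
      constructor
      · intro u hu w hw hne
        simp only [SimpleGraph.top_adj]
        exact hne
      · calc {y | e y < e x ∧ (⊤ : SimpleGraph V).Adj y x}.ncard
            ≤ (Set.univ : Set V).ncard :=
              Set.ncard_le_ncard (Set.subset_univ _) Set.finite_univ
        _ = Nat.card V := Set.ncard_univ V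
  have htw' : sInf {k' : ℕ | ∃ H : SimpleGraph V, G ≤ H ∧ IsKTree k' H} ≤ k := htw
  obtain ⟨H, hGH, hKT⟩ := Nat.sInf_mem hne
  obtain ⟨r, hsto, hxP⟩ := hKT
  have hKT' : IsKTree k H :=
    ⟨r, hsto, fun x => ⟨(hxP x).1, le_trans (hxP x).2 htw'⟩⟩
  obtain ⟨c, hc⟩ := Stmt3Proof.aux p k H hKT' G hGH
  refine ⟨(Fintype.equivFin (Stmt3Proof.ColorT p k)) ∘ c, ?_⟩
  intro S hconn
  rcases hc S hconn with ⟨x, hxS, hxu⟩ | hge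
  · exact Or.inl ⟨x, hxS, fun y hy h => hxu y hy ((Fintype.equivFin _).injective h)⟩
  · right
    rw [Set.image_comp]
    rwa [Set.ncard_image_of_injective _ (Fintype.equivFin _).injective]
end

section
/- For every graph G and all integers c ≥ 1 and r ≥ 0: ∇^c_r(G) = ∇_r(G • K_c), where K_c is the complete graph on c vertices. -/
open scoped Classical

universe u v

section Helpers

open SimpleGraph

/-- Distance does not increase under a graph homomorphism, given reachability. -/
private lemma dist_map_le {α β : Type*} {G : SimpleGraph α} {G' : SimpleGraph β}
    (f : G →g G') {u v : α} (h : G.Reachable u v) :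
    G'.dist (f u) (f v) ≤ G.dist u v := by
  obtain ⟨p, hp⟩ := h.exists_walk_length_eq_dist
  calc G'.dist (f u) (f v) ≤ (p.map f).length := SimpleGraph.dist_le _
    _ = p.length := by simp
    _ = G.dist u v := hp

/-- Projecting a walk in an induced subgraph of a lexicographic product. -/
private lemma proj_walk {V : Type} {c : ℕ} (G : SimpleGraph V) (S : Set (V × Fin c))
    {u w : ↥S} (p : ((lexProd G (⊤ : SimpleGraph (Fin c))).induce S).Walk u w) :
    ∃ q : (G.induce (Prod.fst '' S)).Walk ⟨u.1.1, ⟨u.1, u.2, rfl⟩⟩ ⟨w.1.1, ⟨w.1, w.2, rfl⟩⟩,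
      q.length ≤ p.length := by
  induction p with
  | nil => exact ⟨SimpleGraph.Walk.nil, le_rfl⟩
  | @cons a b z h p ih =>
    obtain ⟨q, hq⟩ := ih
    have h' : (lexProd G (⊤ : SimpleGraph (Fin c))).Adj a.1 b.1 := h
    rcases h' with h' | ⟨h1, _⟩
    · refine ⟨SimpleGraph.Walk.cons (by exact h') q, ?_⟩
      exact Nat.add_le_add_right hq 1
    · have he : (⟨a.1.1, ⟨a.1, a.2, rfl⟩⟩ : ↥(Prod.fst '' S))
          = ⟨b.1.1, ⟨b.1, b.2, rfl⟩⟩ := Subtype.ext h1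
      refine ⟨q.copy he.symm rfl, ?_⟩
      simpa using hq.trans (Nat.le_succ _)

/-- A ball family has at most `c * |V|` balls. -/
private lemma family_card_le {V : Type} [Fintype V] {G : SimpleGraph V} {r c p : ℕ}
    {B : Fin p → Set V} (hB : IsBallFamily G r c B) : p ≤ c * Fintype.card V := by
  classical
  have hne : ∀ i, (B i).Nonempty := fun i =>
    Set.nonempty_coe_sort.mp (hB.1 i).1.nonempty
  choose f hf using hne
  have key : (Finset.univ : Finset (Fin p)).card
      ≤ c * ((Finset.univ : Finset (Fin p)).image f).card := by
    refine Finset.card_le_mul_card_image _ _ (fun a _ => ?_)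
    have hsub : ↑(Finset.univ.filter fun i => f i = a) ⊆ {i : Fin p | a ∈ B i} := by
      intro i hi
      simp only [Finset.coe_filter, Set.mem_setOf_eq] at hi ⊢
      exact hi.2 ▸ hf i
    calc (Finset.univ.filter fun i => f i = a).card
        = (↑(Finset.univ.filter fun i => f i = a) : Set (Fin p)).ncard :=
          (Set.ncard_coe_finset _).symm
      _ ≤ ({i : Fin p | a ∈ B i}).ncard := Set.ncard_le_ncard hsub (Set.toFinite _)
      _ ≤ c := hB.2 a
  calc p = (Finset.univ : Finset (Fin p)).card := (Finset.card_fin p).symm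
    _ ≤ c * ((Finset.univ : Finset (Fin p)).image f).card := key
    _ ≤ c * Fintype.card V := Nat.mul_le_mul_left c (Finset.card_le_univ _)

/-- Any value in the grad set is at most `c * |V|`. -/
private lemma grad_val_le {V : Type} [Fintype V] {G : SimpleGraph V} {r c p : ℕ}
    {B : Fin p → Set V} (hB : IsBallFamily G r c B) :
    ((quotientGraph G B).edgeSet.ncard : ℝ) / (p : ℝ) ≤ (c * Fintype.card V : ℝ) := by
  rcases Nat.eq_zero_or_pos p with hp | hp
  · subst hp
    simp only [Nat.cast_zero, div_zero]
    positivity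
  · have hE : (quotientGraph G B).edgeSet.ncard ≤ p * p := by
      have h1 : (quotientGraph G B).edgeSet.ncard ≤ (Set.univ : Set (Sym2 (Fin p))).ncard :=
        Set.ncard_le_ncard (Set.subset_univ _) (Set.toFinite _)
      have h2 : (Set.univ : Set (Sym2 (Fin p))).ncard = Nat.card (Sym2 (Fin p)) :=
        Set.ncard_univ _
      have h3 : Nat.card (Sym2 (Fin p)) ≤ Nat.card (Fin p × Fin p) := by
        refine Nat.card_le_card_of_surjective (fun x : Fin p × Fin p => Sym2.mk x.1 x.2) ?_
        intro z; exact z.ind fun x y => ⟨(x, y), rfl⟩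
      have h4 : Nat.card (Fin p × Fin p) = p * p := by simp
      omega
    have hple : p ≤ c * Fintype.card V := family_card_le hB
    have hppos : (0 : ℝ) < (p : ℝ) := by exact_mod_cast hp
    calc ((quotientGraph G B).edgeSet.ncard : ℝ) / (p : ℝ)
        ≤ ((p * p : ℕ) : ℝ) / (p : ℝ) := by
          exact div_le_div_of_nonneg_right (by exact_mod_cast hE) hppos.le
      _ = (p : ℝ) := by push_cast; field_simp
      _ ≤ (c * Fintype.card V : ℝ) := by exact_mod_cast hple

/-- The empty family gives `0` in the grad set. -/
private lemma grad_zero_mem {V : Type} [Fintype V] (G : SimpleGraph V) (c r : ℕ) :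
    (0 : ℝ) ∈ {x : ℝ | ∃ (p : ℕ) (B : Fin p → Set V), IsBallFamily G r c B ∧
      x = ((quotientGraph G B).edgeSet.ncard : ℝ) / (p : ℝ)} := by
  refine ⟨0, fun _ => (∅ : Set V), ⟨fun i => i.elim0, fun v => ?_⟩, by simp⟩
  have : ({i : Fin 0 | v ∈ (∅ : Set V)} : Set (Fin 0)) = ∅ := Set.eq_empty_of_isEmpty _
  simp [this]

end Helpers
section Main

open SimpleGraph

private lemma forward_family {V : Type} [Fintype V] (G : SimpleGraph V) {c r p : ℕ}
    (B : Fin p → Set V) (hB : IsBallFamily G r c B) :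
    ∃ B' : Fin p → Set (V × Fin c),
      IsBallFamily (lexProd G (⊤ : SimpleGraph (Fin c))) r 1 B' ∧
      quotientGraph G B = quotientGraph (lexProd G (⊤ : SimpleGraph (Fin c))) B' := by
  classical
  have hg : ∀ v : V, ∃ g : {i : Fin p // v ∈ B i} → Fin c, Function.Injective g := by
    intro v
    have hcard : Fintype.card {i : Fin p // v ∈ B i} ≤ Fintype.card (Fin c) := by
      rw [Fintype.card_fin]
      calc Fintype.card {i : Fin p // v ∈ B i}
          = Nat.card {i : Fin p // v ∈ B i} := Nat.card_eq_fintype_card.symm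
        _ = ({i : Fin p | v ∈ B i} : Set (Fin p)).ncard := Nat.card_coe_set_eq _
        _ ≤ c := hB.2 v
    obtain ⟨f⟩ := Function.Embedding.nonempty_of_card_le hcard
    exact ⟨f, f.injective⟩
  choose g hginj using hg
  set L := lexProd G (⊤ : SimpleGraph (Fin c)) with hLdef
  set B' : Fin p → Set (V × Fin c) :=
    fun i => {q : V × Fin c | ∃ h : q.1 ∈ B i, q.2 = g q.1 ⟨i, h⟩} with hB'def
  have hiso : ∀ i : Fin p, G.induce (B i) ≃g L.induce (B' i) := by
    intro i
    refine ⟨⟨fun x => ⟨(x.1, g x.1 ⟨i, x.2⟩), ⟨x.2, rfl⟩⟩,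
      fun q => ⟨q.1.1, q.2.choose⟩, fun x => Subtype.ext rfl, fun q => ?_⟩, ?_⟩
    · exact Subtype.ext (Prod.ext rfl q.2.choose_spec.symm)
    · rintro ⟨av, ha⟩ ⟨bv, hb⟩
      show L.Adj (av, _) (bv, _) ↔ G.Adj av bv
      constructor
      · rintro (h | ⟨h1, h2⟩)
        · exact h
        · exfalso
          subst h1
          simp at h2
      · exact fun h => Or.inl h
  refine ⟨B', ⟨fun i => ⟨((hiso i).connected_iff).mp (hB.1 i).1, ?_⟩, ?_⟩, ?_⟩
  · obtain ⟨x, hx⟩ := (hB.1 i).2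
    refine ⟨(hiso i) x, fun y => ?_⟩
    have hy : (hiso i) ((hiso i).symm y) = y := (hiso i).apply_symm_apply y
    calc (L.induce (B' i)).dist ((hiso i) x) y
        = (L.induce (B' i)).dist ((hiso i) x) ((hiso i) ((hiso i).symm y)) := by rw [hy]
      _ ≤ (G.induce (B i)).dist x ((hiso i).symm y) :=
          dist_map_le (hiso i).toHom ((hB.1 i).1.preconnected _ _)
      _ ≤ r := hx _
  · intro q
    rw [Set.ncard_le_one_iff (Set.toFinite _)]
    rintro i j ⟨hi, hi2⟩ ⟨hj, hj2⟩
    have : g q.1 ⟨i, hi⟩ = g q.1 ⟨j, hj⟩ := hi2 ▸ hj2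
    have := hginj q.1 this
    exact congrArg Subtype.val this
  · ext i j
    show (i ≠ j ∧ _) ↔ (i ≠ j ∧ _)
    constructor
    · rintro ⟨hij, h⟩
      refine ⟨hij, Or.inr ?_⟩
      rcases h with ⟨v, hvi, hvj⟩ | ⟨u, hu, x, hx, huv⟩
      · refine ⟨(v, g v ⟨i, hvi⟩), ⟨hvi, rfl⟩, (v, g v ⟨j, hvj⟩), ⟨hvj, rfl⟩, Or.inr ⟨rfl, ?_⟩⟩
        have : (⟨i, hvi⟩ : {k : Fin p // v ∈ B k}) ≠ ⟨j, hvj⟩ := by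
          intro h; exact hij (congrArg Subtype.val h)
        exact (SimpleGraph.top_adj _ _).mpr fun h => this (hginj v h)
      · exact ⟨(u, g u ⟨i, hu⟩), ⟨hu, rfl⟩, (x, g x ⟨j, hx⟩), ⟨hx, rfl⟩, Or.inl huv⟩
    · rintro ⟨hij, h⟩
      refine ⟨hij, ?_⟩
      rcases h with ⟨q, hqi, hqj⟩ | ⟨u, ⟨hu, _⟩, x, ⟨hx, _⟩, huv⟩
      · exact Or.inl ⟨q.1, hqi.choose, hqj.choose⟩
      · rcases huv with h | ⟨h1, _⟩
        · exact Or.inr ⟨u.1, hu, x.1, hx, h⟩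
        · exact Or.inl ⟨u.1, hu, h1 ▸ hx⟩

private lemma backward_family {V : Type} [Fintype V] (G : SimpleGraph V) {c r p : ℕ}
    (B' : Fin p → Set (V × Fin c))
    (hB' : IsBallFamily (lexProd G (⊤ : SimpleGraph (Fin c))) r 1 B') :
    ∃ B : Fin p → Set V, IsBallFamily G r c B ∧
      (quotientGraph (lexProd G (⊤ : SimpleGraph (Fin c))) B').edgeSet.ncard
        ≤ (quotientGraph G B).edgeSet.ncard := by
  classical
  set L := lexProd G (⊤ : SimpleGraph (Fin c)) with hLdef
  refine ⟨fun i => Prod.fst '' B' i, ⟨fun i => ⟨?_, ?_⟩, ?_⟩, ?_⟩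
  · -- connectedness
    rw [SimpleGraph.connected_iff]
    constructor
    · rintro ⟨u1, u, hu, rfl⟩ ⟨w1, w, hw, rfl⟩
      have hr : (L.induce (B' i)).Reachable ⟨u, hu⟩ ⟨w, hw⟩ := (hB'.1 i).1.preconnected _ _
      obtain ⟨pw⟩ := hr
      obtain ⟨q, _⟩ := proj_walk G (B' i) pw
      exact q.reachable
    · rw [Set.nonempty_coe_sort]
      have : Nonempty ↥(B' i) := (hB'.1 i).1.nonempty
      rw [Set.nonempty_coe_sort] at this
      exact this.image _
  · -- radius
    obtain ⟨x, hx⟩ := (hB'.1 i).2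
    refine ⟨⟨x.1.1, x.1, x.2, rfl⟩, ?_⟩
    rintro ⟨y1, y, hy, rfl⟩
    have hr : (L.induce (B' i)).Reachable x ⟨y, hy⟩ := (hB'.1 i).1.preconnected _ _
    obtain ⟨pw, hpw⟩ := hr.exists_walk_length_eq_dist
    obtain ⟨q, hq⟩ := proj_walk G (B' i) pw
    calc (G.induce (Prod.fst '' B' i)).dist ⟨x.1.1, x.1, x.2, rfl⟩ ⟨y.1, y, hy, rfl⟩
        ≤ q.length := SimpleGraph.dist_le q
      _ ≤ pw.length := hq
      _ ≤ r := by rw [hpw]; exact hx ⟨y, hy⟩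
  · -- complexity
    intro v
    have hex : ∀ i : {i : Fin p // v ∈ Prod.fst '' B' i}, ∃ a : Fin c, (v, a) ∈ B' i.1 := by
      rintro ⟨i, ⟨q1, q2⟩, hq, rfl⟩
      exact ⟨q2, hq⟩
    choose F hF using hex
    have hinj : Function.Injective F := by
      intro i j hij
      have h1 : (v, F i) ∈ B' i.1 := hF i
      have h2 : (v, F i) ∈ B' j.1 := hij ▸ hF j
      exact Subtype.ext ((Set.ncard_le_one_iff (Set.toFinite _)).mp (hB'.2 (v, F i)) h1 h2)
    calc ({i : Fin p | v ∈ Prod.fst '' B' i}).ncard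
        = Nat.card {i : Fin p // v ∈ Prod.fst '' B' i} := (Nat.card_coe_set_eq _).symm
      _ ≤ Nat.card (Fin c) := Nat.card_le_card_of_injective F hinj
      _ = c := by simp
  · -- edge sets
    have hle : quotientGraph L B' ≤ quotientGraph G (fun i => Prod.fst '' B' i) := by
      rintro i j ⟨hij, h⟩
      refine ⟨hij, ?_⟩
      rcases h with ⟨q, hqi, hqj⟩ | ⟨u, hu, x, hx, huv⟩
      · exact Or.inl ⟨q.1, ⟨q, hqi, rfl⟩, ⟨q, hqj, rfl⟩⟩
      · rcases huv with h | ⟨h1, _⟩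
        · exact Or.inr ⟨u.1, ⟨u, hu, rfl⟩, x.1, ⟨x, hx, rfl⟩, h⟩
        · exact Or.inl ⟨u.1, ⟨u, hu, rfl⟩, ⟨x, hx, h1.symm⟩⟩
    exact Set.ncard_le_ncard (SimpleGraph.edgeSet_mono hle) (Set.toFinite _)

end Main
/-- `∇^c_r(G) = ∇_r(G • K_c)`. -/
theorem stmt10 {V : Type} [Fintype V] (G : SimpleGraph V) (c r : ℕ) (hc : 1 ≤ c) :
    gradCR c r G = gradR r (lexProd G (⊤ : SimpleGraph (Fin c))) := by
  classical
  unfold gradR gradCR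
  have hbddA : BddAbove {x : ℝ | ∃ (p : ℕ) (B : Fin p → Set V), IsBallFamily G r c B ∧
      x = ((quotientGraph G B).edgeSet.ncard : ℝ) / (p : ℝ)} := by
    refine ⟨(c * Fintype.card V : ℝ), ?_⟩
    rintro x ⟨p, B, hB, rfl⟩
    exact grad_val_le hB
  have hbddB : BddAbove {x : ℝ | ∃ (p : ℕ) (B : Fin p → Set (V × Fin c)),
      IsBallFamily (lexProd G (⊤ : SimpleGraph (Fin c))) r 1 B ∧
      x = ((quotientGraph (lexProd G (⊤ : SimpleGraph (Fin c))) B).edgeSet.ncard : ℝ)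
        / (p : ℝ)} := by
    refine ⟨(1 * Fintype.card (V × Fin c) : ℝ), ?_⟩
    rintro x ⟨p, B, hB, rfl⟩
    exact (grad_val_le hB).trans_eq (by norm_num)
  apply le_antisymm
  · refine csSup_le ⟨0, grad_zero_mem G c r⟩ ?_
    rintro x ⟨p, B, hB, rfl⟩
    obtain ⟨B', hB', hq⟩ := forward_family G B hB
    refine le_csSup hbddB ⟨p, B', hB', ?_⟩
    rw [hq]
  · refine csSup_le ⟨0, grad_zero_mem _ 1 r⟩ ?_
    rintro x ⟨p, B', hB', rfl⟩
    obtain ⟨B, hB, hle⟩ := backward_family G B' hB'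
    refine le_trans ?_ (le_csSup hbddA ⟨p, B, hB, rfl⟩)
    exact div_le_div_of_nonneg_right (by exact_mod_cast hle) (by positivity)
end

section
/- For every integer r ≥ 0 there exists a polynomial P_r in two variables such that for every graph G and all integers c ≥ 1: ∇^c_r(G) ≤ P_r(c, ∇_r(G)). -/
open scoped Classical

universe u v

namespace BEaux

variable {V : Type} (G : SimpleGraph V)

/-- Vertices reachable from `x` within `n` steps staying inside `A`. -/
def reach (A : Set V) (x : V) : ℕ → Set V
  | 0 => {x} ∩ A
  | n+1 => reach A x n ∪ {v | v ∈ A ∧ ∃ u ∈ reach A x n, G.Adj u v}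

lemma reach_subset (A : Set V) (x : V) : ∀ n, reach G A x n ⊆ A
  | 0 => Set.inter_subset_right
  | n+1 => by
      intro v hv
      rcases hv with hv | hv
      · exact reach_subset A x n hv
      · exact hv.1

lemma reach_succ_subset (A : Set V) (x : V) (n : ℕ) :
    reach G A x n ⊆ reach G A x (n+1) := Set.subset_union_left

lemma reach_mono (A : Set V) (x : V) {m n : ℕ} (h : m ≤ n) :
    reach G A x m ⊆ reach G A x n := by
  induction n with
  | zero => simp_all
  | succ n ih =>
    rcases Nat.lt_or_ge m (n+1) with h' | h'
    · exact (ih (Nat.lt_succ_iff.mp h')).trans (reach_succ_subset G A x n)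
    · have : m = n + 1 := le_antisymm h h'
      subst this; exact subset_rfl

lemma self_mem_reach (A : Set V) {x : V} (hx : x ∈ A) (n : ℕ) : x ∈ reach G A x n :=
  reach_mono G A x (Nat.zero_le n) ⟨rfl, hx⟩

lemma reach_eq_empty (A : Set V) {x : V} (hx : x ∉ A) : ∀ n, reach G A x n = ∅
  | 0 => Set.eq_empty_iff_forall_notMem.2 (by rintro v ⟨rfl, hv⟩; exact hx hv)
  | n+1 => Set.eq_empty_iff_forall_notMem.2 (by
      rintro v (hv | ⟨-, u, hu, -⟩)
      · rw [reach_eq_empty A hx n] at hv; exact hv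
      · rw [reach_eq_empty A hx n] at hu; exact hu)

lemma reach_adj_subset (A : Set V) {x y : V} (hx : x ∈ A) (hy : y ∈ A) (hadj : G.Adj x y) :
    ∀ n, reach G A y n ⊆ reach G A x (n+1)
  | 0 => by
      rintro v ⟨rfl, -⟩
      exact Or.inr ⟨hy, x, self_mem_reach G A hx 0, hadj⟩
  | n+1 => by
      rintro v (hv | ⟨hvA, u, hu, huv⟩)
      · exact reach_succ_subset G A x (n+1) (reach_adj_subset A hx hy hadj n hv)
      · exact Or.inr ⟨hvA, u, reach_adj_subset A hx hy hadj n hu, huv⟩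

/-- Membership in `reach` from a walk staying in `A`. -/
lemma walk_mem_reach {A : Set V} : ∀ {x v : V} (p : G.Walk x v) (n : ℕ), p.length ≤ n →
    (∀ y ∈ p.support, y ∈ A) → v ∈ reach G A x n := by
  intro x v p
  induction p with
  | nil =>
    intro n _ hA
    exact self_mem_reach G A (hA _ (by simp)) n
  | @cons a b c h q ih =>
    intro n hn hA
    have hlen : q.length + 1 ≤ n := by simpa using hn
    obtain ⟨m, rfl⟩ : ∃ m, n = m + 1 := ⟨n - 1, by omega⟩
    have hA' : ∀ y ∈ q.support, y ∈ A := by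
      intro y hy; exact hA y (by simp [SimpleGraph.Walk.support_cons, hy])
    have hb : b ∈ A := hA' _ q.start_mem_support
    have ha : a ∈ A := hA _ (by simp [SimpleGraph.Walk.support_cons])
    exact reach_adj_subset G A ha hb h m (ih m (by omega) hA')

lemma exists_walk_of_mem_reach {A : Set V} {x : V} (hx : x ∈ A) {r : ℕ} :
    ∀ {n : ℕ}, n ≤ r → ∀ {v : V}, v ∈ reach G A x n →
      ∃ (hv : v ∈ reach G A x r)
        (p : (G.induce (reach G A x r)).Walk ⟨x, self_mem_reach G A hx r⟩ ⟨v, hv⟩),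
          p.length ≤ n := by
  intro n
  induction n with
  | zero =>
    rintro _ v ⟨rfl, -⟩
    exact ⟨self_mem_reach G A hx r, SimpleGraph.Walk.nil, by simp⟩
  | succ n ih =>
    intro hn v hv
    rcases hv with hv | ⟨hvA, u, hu, huv⟩
    · obtain ⟨hv', p, hp⟩ := ih (by omega) hv
      exact ⟨hv', p, by omega⟩
    · obtain ⟨hu', p, hp⟩ := ih (by omega) hu
      have hv' : v ∈ reach G A x r :=
        reach_mono G A x hn (Or.inr ⟨hvA, u, hu, huv⟩)
      have hadj : (G.induce (reach G A x r)).Adj ⟨u, hu'⟩ ⟨v, hv'⟩ := huv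
      exact ⟨hv', p.concat hadj, by rw [SimpleGraph.Walk.length_concat]; omega⟩

lemma reach_isBall {A : Set V} {x : V} (hx : x ∈ A) (r : ℕ) :
    (G.induce (reach G A x r)).Connected ∧
      ∃ z : reach G A x r, ∀ y : reach G A x r, (G.induce (reach G A x r)).dist z y ≤ r := by
  have hwalk : ∀ y : reach G A x r,
      ∃ p : (G.induce (reach G A x r)).Walk ⟨x, self_mem_reach G A hx r⟩ y, p.length ≤ r := by
    rintro ⟨v, hv⟩
    obtain ⟨hv', p, hp⟩ := exists_walk_of_mem_reach G hx le_rfl hv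
    exact ⟨p, hp⟩
  constructor
  · haveI : Nonempty (reach G A x r) := ⟨⟨x, self_mem_reach G A hx r⟩⟩
    refine ⟨fun a b => ?_⟩
    obtain ⟨p, -⟩ := hwalk a
    obtain ⟨q, -⟩ := hwalk b
    exact p.reachable.symm.trans q.reachable
  · refine ⟨⟨x, self_mem_reach G A hx r⟩, fun y => ?_⟩
    obtain ⟨p, hp⟩ := hwalk y
    exact le_trans (SimpleGraph.dist_le p) hp

lemma ball_walks {B : Set V} (hconn : (G.induce B).Connected)
    {r : ℕ} (hx : ∃ z : B, ∀ y : B, (G.induce B).dist z y ≤ r) :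
    ∃ xc : V, xc ∈ B ∧ ∀ v ∈ B, ∃ p : G.Walk xc v, p.length ≤ r ∧ ∀ y ∈ p.support, y ∈ B := by
  obtain ⟨⟨xc, hxc⟩, hz⟩ := hx
  refine ⟨xc, hxc, fun v hv => ?_⟩
  have hreach := hconn.preconnected ⟨xc, hxc⟩ ⟨v, hv⟩
  obtain ⟨q, hq⟩ := hreach.exists_walk_length_eq_dist
  have hlen : q.length ≤ r := le_trans (le_of_eq hq) (hz ⟨v, hv⟩)
  refine ⟨q.map (SimpleGraph.Embedding.induce B).toHom, ?_, ?_⟩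
  · exact (SimpleGraph.Walk.length_map _ q).trans_le hlen
  · intro y hy
    have hy2 : y ∈ q.support.map (SimpleGraph.Embedding.induce B).toHom :=
      (congrArg (y ∈ ·) (SimpleGraph.Walk.support_map (SimpleGraph.Embedding.induce B).toHom q)).mp hy
    obtain ⟨z, hz', rfl⟩ := List.mem_map.mp hy2
    exact z.2

lemma walk_split {P : Set V} : ∀ {x w : V} (p : G.Walk x w), x ∉ P →
    (∀ y ∈ p.support, y ∉ P) ∨
      ∃ u' v', G.Adj u' v' ∧ v' ∈ P ∧ v' ∈ p.support ∧
        ∃ q : G.Walk x u', q.length ≤ p.length ∧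
          (∀ y ∈ q.support, y ∈ p.support) ∧ ∀ y ∈ q.support, y ∉ P := by
  intro x w p
  induction p with
  | nil =>
    intro hx; left; intro y hy; simp only [SimpleGraph.Walk.support_nil, List.mem_singleton] at hy
    subst hy; exact hx
  | @cons a b c h q ih =>
    intro ha
    by_cases hb : b ∈ P
    · right
      refine ⟨a, b, h, hb, ?_, SimpleGraph.Walk.nil, by simp, ?_, ?_⟩
      · simp [SimpleGraph.Walk.support_cons]
      · intro y hy
        simp only [SimpleGraph.Walk.support_nil, List.mem_singleton] at hy
        subst hy; simp [SimpleGraph.Walk.support_cons]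
      · intro y hy
        simp only [SimpleGraph.Walk.support_nil, List.mem_singleton] at hy
        subst hy; exact ha
    · rcases ih hb with h1 | ⟨u', v', hadj, hvP, hvs, q', hq1, hq2, hq3⟩
      · left; intro y hy
        rw [SimpleGraph.Walk.support_cons] at hy
        rcases List.mem_cons.mp hy with rfl | hy
        · exact ha
        · exact h1 y hy
      · right
        refine ⟨u', v', hadj, hvP, ?_, SimpleGraph.Walk.cons h q', ?_, ?_, ?_⟩
        · rw [SimpleGraph.Walk.support_cons]; exact List.mem_cons_of_mem _ hvs
        · simp only [SimpleGraph.Walk.length_cons]; omega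
        · intro y hy
          rw [SimpleGraph.Walk.support_cons] at hy ⊢
          rcases List.mem_cons.mp hy with rfl | hy
          · exact List.mem_cons_self
          · exact List.mem_cons_of_mem _ (hq2 y hy)
        · intro y hy
          rw [SimpleGraph.Walk.support_cons] at hy
          rcases List.mem_cons.mp hy with rfl | hy
          · exact ha
          · exact hq3 y hy

/-! ### The carving process -/

def cva (B' : ℕ → Set V) (x' : ℕ → V) (r : ℕ) (n : ℕ) (P : Set V) : Set V :=
  if x' n ∈ P then ∅ else reach G (B' n \ P) (x' n) r

def prevC (B' : ℕ → Set V) (x' : ℕ → V) (r : ℕ) : ℕ → Set V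
  | 0 => ∅
  | n+1 => prevC B' x' r n ∪ cva G B' x' r n (prevC B' x' r n)

def carve (B' : ℕ → Set V) (x' : ℕ → V) (r : ℕ) (n : ℕ) : Set V :=
  cva G B' x' r n (prevC G B' x' r n)

variable (B' : ℕ → Set V) (x' : ℕ → V) (r : ℕ)

lemma carve_subset (n : ℕ) : carve G B' x' r n ⊆ B' n \ prevC G B' x' r n := by
  unfold carve cva
  split
  · exact Set.empty_subset _
  · exact reach_subset G _ _ r

lemma prevC_succ (n : ℕ) :
    prevC G B' x' r (n+1) = prevC G B' x' r n ∪ carve G B' x' r n := rfl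

lemma prevC_mono {m n : ℕ} (h : m ≤ n) : prevC G B' x' r m ⊆ prevC G B' x' r n := by
  induction n with
  | zero => simp_all
  | succ n ih =>
    rcases Nat.lt_or_ge m (n+1) with h' | h'
    · exact (ih (Nat.lt_succ_iff.mp h')).trans (by rw [prevC_succ]; exact Set.subset_union_left)
    · have : m = n + 1 := le_antisymm h h'
      subst this; exact subset_rfl

lemma carve_subset_prevC {m n : ℕ} (h : m < n) : carve G B' x' r m ⊆ prevC G B' x' r n :=
  le_trans (by rw [prevC_succ]; exact Set.subset_union_right) (prevC_mono G B' x' r h)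

lemma carve_disj {m n : ℕ} (h : m < n) {v : V} (hv : v ∈ carve G B' x' r m) :
    v ∉ carve G B' x' r n := fun hv' =>
  (carve_subset G B' x' r n hv').2 (carve_subset_prevC G B' x' r h hv)

lemma carve_nonempty_props {n : ℕ} (h : (carve G B' x' r n).Nonempty) :
    x' n ∈ B' n \ prevC G B' x' r n ∧
      carve G B' x' r n = reach G (B' n \ prevC G B' x' r n) (x' n) r := by
  unfold carve cva at h ⊢
  by_cases hx : x' n ∈ prevC G B' x' r n
  · rw [if_pos hx] at h; exact absurd rfl h.ne_empty.symm
  · rw [if_neg hx] at h ⊢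
    by_cases hxB : x' n ∈ B' n \ prevC G B' x' r n
    · exact ⟨hxB, rfl⟩
    · rw [reach_eq_empty G _ hxB r] at h
      exact absurd rfl h.ne_empty.symm

lemma mem_carve_of_walk {n : ℕ} {v : V} (p : G.Walk (x' n) v) (hlen : p.length ≤ r)
    (hsup : ∀ y ∈ p.support, y ∈ B' n ∧ y ∉ prevC G B' x' r n) :
    v ∈ carve G B' x' r n := by
  have hx : x' n ∉ prevC G B' x' r n := (hsup _ p.start_mem_support).2
  unfold carve cva
  rw [if_neg hx]
  exact walk_mem_reach G p r hlen (fun y hy => ⟨(hsup y hy).1, (hsup y hy).2⟩)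

/-- The main adjacency lemma: if `a < b` are processed before every other ball meeting `S`,
the carved sets of `a` and `b` are joined by an edge. -/
lemma main_adj {a b : ℕ} (hab : a < b) {S : Set V} {u w : V}
    (pQ : G.Walk (x' a) u) (hQlen : pQ.length ≤ r)
    (hQsup : ∀ y ∈ pQ.support, y ∈ B' a ∧ y ∈ S)
    (pR : G.Walk (x' b) w) (hRlen : pR.length ≤ r)
    (hRsup : ∀ y ∈ pR.support, y ∈ B' b ∧ y ∈ S)
    (huw : u = w ∨ G.Adj u w)
    (hT : ∀ t, t < b → t ≠ a → ∀ v ∈ B' t, v ∉ S)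
    (hxb : x' b ∉ B' a) :
    ∃ y ∈ carve G B' x' r a, ∃ z ∈ carve G B' x' r b, G.Adj y z := by
  have hPa : ∀ v ∈ prevC G B' x' r a, v ∉ S := by
    have key : ∀ n, n ≤ a → ∀ v ∈ prevC G B' x' r n, v ∉ S := by
      intro n
      induction n with
      | zero => intro _ v hv; exact absurd hv (Set.notMem_empty v)
      | succ n ih =>
        intro hn v hv
        rcases hv with hv | hv
        · exact ih (by omega) v hv
        · have hvB : v ∈ B' n := (carve_subset G B' x' r n hv).1
          exact hT n (by omega) (by omega) v hvB
    exact key a le_rfl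
  have hua : u ∈ carve G B' x' r a :=
    mem_carve_of_walk G B' x' r pQ hQlen
      (fun y hy => ⟨(hQsup y hy).1, fun hP => hPa y hP (hQsup y hy).2⟩)
  have hPb : ∀ v ∈ prevC G B' x' r b, v ∈ S → v ∈ carve G B' x' r a := by
    have key : ∀ n, n ≤ b → ∀ v ∈ prevC G B' x' r n, v ∈ S → v ∈ carve G B' x' r a := by
      intro n
      induction n with
      | zero => intro _ v hv; exact absurd hv (Set.notMem_empty v)
      | succ n ih =>
        intro hn v hv hvS
        rcases hv with hv | hv
        · exact ih (by omega) v hv hvS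
        · by_cases hna : n = a
          · subst hna; exact hv
          · have hvB : v ∈ B' n := (carve_subset G B' x' r n hv).1
            exact absurd hvS (hT n (by omega) hna v hvB)
    exact key b le_rfl
  have hxbS : x' b ∈ S := (hRsup _ pR.start_mem_support).2
  have hxbP : x' b ∉ prevC G B' x' r b := fun h =>
    hxb (carve_subset G B' x' r a (hPb _ h hxbS)).1
  rcases walk_split G pR hxbP with hleft | ⟨u', v', hadj, hvP, hvs, q, hq1, hq2, hq3⟩
  · have hwb : w ∈ carve G B' x' r b :=
      mem_carve_of_walk G B' x' r pR hRlen
        (fun y hy => ⟨(hRsup y hy).1, hleft y hy⟩)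
    rcases huw with rfl | hadj
    · exact absurd hwb (fun h => (carve_subset G B' x' r b h).2
        (carve_subset_prevC G B' x' r hab hua))
    · exact ⟨u, hua, w, hwb, hadj⟩
  · have hv'a : v' ∈ carve G B' x' r a := hPb v' hvP (hRsup v' hvs).2
    have hu'b : u' ∈ carve G B' x' r b :=
      mem_carve_of_walk G B' x' r q (le_trans hq1 hRlen)
        (fun y hy => ⟨(hRsup y (hq2 y hy)).1, hq3 y hy⟩)
    exact ⟨v', hv'a, u', hu'b, hadj.symm⟩

/-! ### Permutation counting -/

section Counting

lemma swap_mem_K {α : Type*} [DecidableEq α] {K : Set α} {u v : α} (hu : u ∈ K) (hv : v ∈ K)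
    {x : α} (hx : x ∈ K) : Equiv.swap u v x ∈ K := by
  rw [Equiv.swap_apply_def]; split_ifs <;> assumption

def pairSwap {α : Type*} [DecidableEq α] (a b a' b' : α) : Equiv.Perm α :=
  (Equiv.swap a a').trans (Equiv.swap (Equiv.swap a a' b) b')

lemma pairSwap_apply_fst {α : Type*} [DecidableEq α] {a b a' b' : α}
    (hab : a ≠ b) (h2 : a' ≠ b') : pairSwap a b a' b' a = a' := by
  unfold pairSwap
  rw [Equiv.trans_apply, Equiv.swap_apply_left]
  apply Equiv.swap_apply_of_ne_of_ne
  · intro h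
    exact hab ((Equiv.swap a a').injective ((Equiv.swap_apply_left a a').trans h))
  · exact h2

lemma pairSwap_apply_snd {α : Type*} [DecidableEq α] (a b a' b' : α) :
    pairSwap a b a' b' b = b' := by
  unfold pairSwap
  rw [Equiv.trans_apply]
  exact Equiv.swap_apply_left _ _

lemma pairSwap_mem {α : Type*} [DecidableEq α] {K : Set α} {a b a' b' : α}
    (ha : a ∈ K) (hb : b ∈ K) (ha' : a' ∈ K) (hb' : b' ∈ K) {x : α} (hx : x ∈ K) :
    pairSwap a b a' b' x ∈ K := by
  unfold pairSwap
  rw [Equiv.trans_apply]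
  exact swap_mem_K (swap_mem_K ha ha' hb) hb' (swap_mem_K ha ha' hx)

lemma pairSwap_apply_of_ne {α : Type*} [DecidableEq α] {a b a' b' x : α}
    (h1 : x ≠ a) (h2 : x ≠ b) (h3 : x ≠ a') (h4 : x ≠ b') : pairSwap a b a' b' x = x := by
  unfold pairSwap
  rw [Equiv.trans_apply, Equiv.swap_apply_of_ne_of_ne h1 h3]
  have hz : Equiv.swap a a' b = a ∨ Equiv.swap a a' b = a' ∨ Equiv.swap a a' b = b := by
    rw [Equiv.swap_apply_def]; split_ifs <;> tauto
  apply Equiv.swap_apply_of_ne_of_ne _ h4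
  rcases hz with hz | hz | hz <;> rw [hz] <;> assumption

variable {N : ℕ}

noncomputable def pMin (T : Finset (Fin N)) (hT : T.Nonempty) (σ : Equiv.Perm (Fin N)) : Fin N :=
  (T.image ⇑σ.symm).min' (hT.image _)

lemma pMin_mem_pos (T : Finset (Fin N)) (hT) (σ : Equiv.Perm (Fin N)) :
    pMin T hT σ ∈ T.image ⇑σ.symm := Finset.min'_mem _ _

lemma pMin_le (T : Finset (Fin N)) (hT) (σ : Equiv.Perm (Fin N)) {t : Fin N} (ht : t ∈ T) :
    pMin T hT σ ≤ σ.symm t := Finset.min'_le _ _ (Finset.mem_image_of_mem _ ht)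

lemma erase_pMin_nonempty (T : Finset (Fin N)) (hT2 : 1 < T.card) (σ : Equiv.Perm (Fin N)) :
    ((T.image ⇑σ.symm).erase (pMin T (Finset.card_pos.mp (by omega)) σ)).Nonempty := by
  apply Finset.card_pos.mp
  rw [Finset.card_erase_of_mem (pMin_mem_pos _ _ _),
    Finset.card_image_of_injective _ σ.symm.injective]
  omega

noncomputable def pMin2 (T : Finset (Fin N)) (hT2 : 1 < T.card) (σ : Equiv.Perm (Fin N)) : Fin N :=
  ((T.image ⇑σ.symm).erase (pMin T (Finset.card_pos.mp (by omega)) σ)).min'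
    (erase_pMin_nonempty T hT2 σ)

lemma pMin2_mem_erase (T : Finset (Fin N)) (hT2 : 1 < T.card) (σ : Equiv.Perm (Fin N)) :
    pMin2 T hT2 σ ∈ (T.image ⇑σ.symm).erase (pMin T (Finset.card_pos.mp (by omega)) σ) :=
  Finset.min'_mem _ _

lemma pMin_lt_pMin2 (T : Finset (Fin N)) (hT2 : 1 < T.card) (σ : Equiv.Perm (Fin N)) :
    pMin T (Finset.card_pos.mp (by omega)) σ < pMin2 T hT2 σ := by
  have h := pMin2_mem_erase T hT2 σ
  rw [Finset.mem_erase] at h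
  exact lt_of_le_of_ne (Finset.min'_le _ _ h.2) (Ne.symm h.1)

lemma pMin2_le (T : Finset (Fin N)) (hT2 : 1 < T.card) (σ : Equiv.Perm (Fin N)) {t : Fin N}
    (ht : t ∈ T) (hne : σ.symm t ≠ pMin T (Finset.card_pos.mp (by omega)) σ) :
    pMin2 T hT2 σ ≤ σ.symm t :=
  Finset.min'_le _ _ (Finset.mem_erase.mpr ⟨hne, Finset.mem_image_of_mem _ ht⟩)

end Counting

lemma count_good {N : ℕ} (T : Finset (Fin N)) {a b : Fin N}
    (ha : a ∈ T) (hb : b ∈ T) (hab : a ≠ b) (Good : Equiv.Perm (Fin N) → Prop)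
    (hGood : ∀ σ : Equiv.Perm (Fin N),
      σ.symm a < σ.symm b → (∀ t ∈ T, t ≠ a → t ≠ b → σ.symm b < σ.symm t) → Good σ) :
    Nat.factorial N ≤ T.card * T.card * (Finset.univ.filter (fun σ => Good σ)).card := by
  classical
  have hT1 : T.Nonempty := ⟨a, ha⟩
  have hT2 : 1 < T.card := Finset.one_lt_card.mpr ⟨a, ha, b, hb, hab⟩
  set F : Equiv.Perm (Fin N) → (Fin N × Fin N) × Equiv.Perm (Fin N) := fun σ =>
    ((σ (pMin T hT1 σ), σ (pMin2 T hT2 σ)),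
      ((pairSwap a b (σ (pMin T hT1 σ)) (σ (pMin2 T hT2 σ))).trans σ.symm).symm) with hF
  have hmem : ∀ σ : Equiv.Perm (Fin N),
      σ (pMin T hT1 σ) ∈ T ∧ σ (pMin2 T hT2 σ) ∈ T ∧ σ (pMin T hT1 σ) ≠ σ (pMin2 T hT2 σ) := by
    intro σ
    obtain ⟨t, htT, hteq⟩ := Finset.mem_image.mp (pMin_mem_pos T hT1 σ)
    obtain ⟨t2, ht2T, ht2eq⟩ :=
      Finset.mem_image.mp (Finset.mem_of_mem_erase (pMin2_mem_erase T hT2 σ))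
    refine ⟨?_, ?_, ?_⟩
    · rw [← hteq, Equiv.apply_symm_apply]; exact htT
    · rw [← ht2eq, Equiv.apply_symm_apply]; exact ht2T
    · intro h
      exact absurd (σ.injective h) (ne_of_lt (pMin_lt_pMin2 T hT2 σ))
  have hτsymm : ∀ σ : Equiv.Perm (Fin N), (F σ).2.symm
      = (pairSwap a b (σ (pMin T hT1 σ)) (σ (pMin2 T hT2 σ))).trans σ.symm := by
    intro σ; simp [hF]
  have hgoodF : ∀ σ : Equiv.Perm (Fin N), Good (F σ).2 := by
    intro σ
    obtain ⟨hA'T, hB2T, hA'B2⟩ := hmem σ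
    have hτ := hτsymm σ
    have hτa : (F σ).2.symm a = pMin T hT1 σ := by
      rw [hτ, Equiv.trans_apply, pairSwap_apply_fst hab hA'B2, Equiv.symm_apply_apply]
    have hτb : (F σ).2.symm b = pMin2 T hT2 σ := by
      rw [hτ, Equiv.trans_apply, pairSwap_apply_snd, Equiv.symm_apply_apply]
    apply hGood
    · rw [hτa, hτb]; exact pMin_lt_pMin2 T hT2 σ
    · intro t htT htna htnb
      rw [hτb, hτ, Equiv.trans_apply]
      have hρT : pairSwap a b (σ (pMin T hT1 σ)) (σ (pMin2 T hT2 σ)) t ∈ T :=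
        pairSwap_mem (K := {x | x ∈ T}) ha hb hA'T hB2T htT
      have hρA : pairSwap a b (σ (pMin T hT1 σ)) (σ (pMin2 T hT2 σ)) t ≠ σ (pMin T hT1 σ) := by
        intro h
        exact htna ((pairSwap a b _ _).injective (h.trans (pairSwap_apply_fst hab hA'B2).symm))
      have hρB : pairSwap a b (σ (pMin T hT1 σ)) (σ (pMin2 T hT2 σ)) t ≠ σ (pMin2 T hT2 σ) := by
        intro h
        exact htnb ((pairSwap a b _ _).injective (h.trans (pairSwap_apply_snd a b _ _).symm))
      have h1 : σ.symm (pairSwap a b (σ (pMin T hT1 σ)) (σ (pMin2 T hT2 σ)) t)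
          ≠ pMin T hT1 σ := by
        intro h; apply hρA
        rw [← Equiv.apply_symm_apply σ (pairSwap a b _ _ t), h]
      have h2 : σ.symm (pairSwap a b (σ (pMin T hT1 σ)) (σ (pMin2 T hT2 σ)) t)
          ≠ pMin2 T hT2 σ := by
        intro h; apply hρB
        rw [← Equiv.apply_symm_apply σ (pairSwap a b _ _ t), h]
      exact lt_of_le_of_ne (pMin2_le T hT2 σ hρT h1) (Ne.symm h2)
  have hinj : Set.InjOn F ↑(Finset.univ : Finset (Equiv.Perm (Fin N))) := by
    intro σ1 _ σ2 _ heq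
    have h11 : σ1 (pMin T hT1 σ1) = σ2 (pMin T hT1 σ2) := congrArg (fun z => z.1.1) heq
    have h12 : σ1 (pMin2 T hT2 σ1) = σ2 (pMin2 T hT2 σ2) := congrArg (fun z => z.1.2) heq
    have h2 : (F σ1).2.symm = (F σ2).2.symm := congrArg Equiv.symm (congrArg Prod.snd heq)
    rw [hτsymm σ1, hτsymm σ2, ← h11, ← h12] at h2
    have hpt : ∀ x, σ1.symm x = σ2.symm x := by
      intro x
      have h3 := congrArg
        (fun e : Equiv.Perm (Fin N) =>
          e ((pairSwap a b (σ1 (pMin T hT1 σ1)) (σ1 (pMin2 T hT2 σ1))).symm x)) h2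
      simpa [Equiv.trans_apply, Equiv.apply_symm_apply] using h3
    have hs : σ1.symm = σ2.symm := Equiv.ext hpt
    rw [← Equiv.symm_symm σ1, hs, Equiv.symm_symm]
  have hsub : ∀ σ ∈ (Finset.univ : Finset (Equiv.Perm (Fin N))),
      F σ ∈ (T ×ˢ T) ×ˢ (Finset.univ.filter fun σ => Good σ) := by
    intro σ _
    obtain ⟨h1, h2, _⟩ := hmem σ
    exact Finset.mem_product.mpr ⟨Finset.mem_product.mpr ⟨h1, h2⟩,
      Finset.mem_filter.mpr ⟨Finset.mem_univ _, hgoodF σ⟩⟩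
  calc Nat.factorial N = Fintype.card (Equiv.Perm (Fin N)) := by
        rw [Fintype.card_perm, Fintype.card_fin]
    _ = (Finset.univ : Finset (Equiv.Perm (Fin N))).card := Finset.card_univ.symm
    _ ≤ ((T ×ˢ T) ×ˢ (Finset.univ.filter fun σ => Good σ)).card :=
        Finset.card_le_card_of_injOn F hsub hinj
    _ = T.card * T.card * (Finset.univ.filter fun σ => Good σ).card := by
        rw [Finset.card_product, Finset.card_product]

/-! ### The carved family of surviving balls -/

section Survivors

variable (B' : ℕ → Set V) (x' : ℕ → V) (r : ℕ) (p : ℕ)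

noncomputable def svF : Finset ℕ :=
  (Finset.range p).filter (fun n => (carve G B' x' r n).Nonempty)

noncomputable def starFam : Fin ((svF G B' x' r p).card) → Set V :=
  fun i => carve G B' x' r (((svF G B' x' r p).orderIsoOfFin rfl i : ℕ))

lemma ncard_le_one_of_subsingleton {α : Type*} {s : Set α} (h : s.Subsingleton) :
    s.ncard ≤ 1 := by
  rcases s.eq_empty_or_nonempty with rfl | ⟨i, hi⟩
  · simp
  · have hsub : s ⊆ {i} := fun x hx => h hx hi
    calc s.ncard ≤ ({i} : Set α).ncard := Set.ncard_le_ncard hsub (Set.finite_singleton i)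
      _ = 1 := Set.ncard_singleton i

lemma starFam_isBallFamily : IsBallFamily G r 1 (starFam G B' x' r p) := by
  constructor
  · intro i
    set n : ℕ := ((svF G B' x' r p).orderIsoOfFin rfl i : ℕ) with hn
    have hmem : n ∈ svF G B' x' r p := ((svF G B' x' r p).orderIsoOfFin rfl i).2
    have hne : (carve G B' x' r n).Nonempty := (Finset.mem_filter.mp hmem).2
    obtain ⟨hx, hcarve⟩ := carve_nonempty_props G B' x' r hne
    have := reach_isBall G hx r
    unfold starFam
    rw [← hn, hcarve]
    exact this
  · intro v
    apply ncard_le_one_of_subsingleton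
    intro i hi j hj
    by_contra hij
    have hvi : v ∈ carve G B' x' r (((svF G B' x' r p).orderIsoOfFin rfl i : ℕ)) := hi
    have hvj : v ∈ carve G B' x' r (((svF G B' x' r p).orderIsoOfFin rfl j : ℕ)) := hj
    have hne : (((svF G B' x' r p).orderIsoOfFin rfl i : ℕ))
        ≠ (((svF G B' x' r p).orderIsoOfFin rfl j : ℕ)) := by
      intro h
      apply hij
      have := Subtype.ext (α := ℕ) h (p := fun n => n ∈ svF G B' x' r p)
      exact ((svF G B' x' r p).orderIsoOfFin rfl).injective this
    rcases Nat.lt_or_ge (((svF G B' x' r p).orderIsoOfFin rfl i : ℕ))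
        (((svF G B' x' r p).orderIsoOfFin rfl j : ℕ)) with h | h
    · exact carve_disj G B' x' r h hvi hvj
    · exact carve_disj G B' x' r (lt_of_le_of_ne h (Ne.symm hne)) hvj hvi

lemma starFam_apply (i : Fin ((svF G B' x' r p).card)) :
    starFam G B' x' r p i
      = carve G B' x' r (((svF G B' x' r p).orderIsoOfFin rfl i : ℕ)) := rfl

lemma svF_card_le : (svF G B' x' r p).card ≤ p :=
  le_trans (Finset.card_filter_le _ _) (by rw [Finset.card_range])

end Survivors

/-! ### Facts about `gradR` -/

section GradFacts

variable [Fintype V] (r : ℕ)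

lemma sym2_card_le (p : ℕ) : Nat.card (Sym2 (Fin p)) ≤ p * p := by
  rw [Nat.card_eq_fintype_card, Sym2.card, Fintype.card_fin, Nat.choose_two_right]
  apply Nat.div_le_of_le_mul
  cases p with
  | zero => simp
  | succ n =>
    have h1 : n + 1 + 1 - 1 = n + 1 := rfl
    rw [h1]; nlinarith

lemma edge_ncard_le {p : ℕ} (H : SimpleGraph (Fin p)) : H.edgeSet.ncard ≤ p * p := by
  calc H.edgeSet.ncard ≤ (Set.univ : Set (Sym2 (Fin p))).ncard :=
        Set.ncard_le_ncard (Set.subset_univ _) Set.finite_univ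
    _ = Nat.card (Sym2 (Fin p)) := Set.ncard_univ _
    _ ≤ p * p := sym2_card_le p

omit [Fintype V] in
lemma zero_mem_S1 : (0 : ℝ) ∈ {x : ℝ | ∃ (p : ℕ) (B : Fin p → Set V), IsBallFamily G r 1 B ∧
    x = ((quotientGraph G B).edgeSet.ncard : ℝ) / (p : ℝ)} := by
  refine ⟨0, fun i => i.elim0, ⟨fun i => i.elim0, fun v => ?_⟩, by simp⟩
  have : ({i : Fin 0 | v ∈ (fun i => i.elim0 : Fin 0 → Set V) i}) = ∅ :=
    Set.eq_empty_of_isEmpty _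
  rw [this]; simp

lemma S1_le (x : ℝ) (hx : x ∈ {x : ℝ | ∃ (p : ℕ) (B : Fin p → Set V), IsBallFamily G r 1 B ∧
    x = ((quotientGraph G B).edgeSet.ncard : ℝ) / (p : ℝ)}) :
    x ≤ (Fintype.card V : ℝ) := by
  obtain ⟨p, B, hfam, rfl⟩ := hx
  rcases Nat.eq_zero_or_pos p with rfl | hp
  · simp
  · have hple : p ≤ Fintype.card V := by
      have hsel : ∀ i : Fin p, ∃ v : V, v ∈ B i := fun i => by
        obtain ⟨⟨v, hv⟩, -⟩ := (hfam.1 i).2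
        exact ⟨v, hv⟩
      choose f hf using hsel
      have hinj : Function.Injective f := by
        intro i j hij
        by_contra hne
        have h2 : ({i, j} : Set (Fin p)) ⊆ {k | f i ∈ B k} := by
          intro k hk
          simp only [Set.mem_insert_iff, Set.mem_singleton_iff] at hk
          rcases hk with rfl | rfl
          · exact hf _
          · rw [hij]; exact hf _
        have := Set.ncard_le_ncard h2 (Set.toFinite _)
        rw [Set.ncard_pair hne] at this
        have := le_trans this (hfam.2 (f i))
        omega
      calc p = Fintype.card (Fin p) := (Fintype.card_fin p).symm
        _ ≤ Fintype.card V := Fintype.card_le_of_injective f hinj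
    rw [div_le_iff₀ (by exact_mod_cast hp)]
    calc ((quotientGraph G B).edgeSet.ncard : ℝ) ≤ (p * p : ℕ) := by
          exact_mod_cast edge_ncard_le _
      _ = (p : ℝ) * p := by push_cast; ring
      _ ≤ (Fintype.card V : ℝ) * p := by
          apply mul_le_mul_of_nonneg_right _ (by positivity)
          exact_mod_cast hple

lemma bddAbove_S1 : BddAbove {x : ℝ | ∃ (p : ℕ) (B : Fin p → Set V), IsBallFamily G r 1 B ∧
    x = ((quotientGraph G B).edgeSet.ncard : ℝ) / (p : ℝ)} :=
  ⟨(Fintype.card V : ℝ), fun x hx => S1_le G r x hx⟩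

lemma gradR_nonneg : 0 ≤ gradR r G :=
  le_csSup (bddAbove_S1 G r) (zero_mem_S1 G r)

lemma le_gradR (x : ℝ) (hx : x ∈ {x : ℝ | ∃ (p : ℕ) (B : Fin p → Set V), IsBallFamily G r 1 B ∧
    x = ((quotientGraph G B).edgeSet.ncard : ℝ) / (p : ℝ)}) : x ≤ gradR r G :=
  le_csSup (bddAbove_S1 G r) hx

end GradFacts

/-! ### The main per-family bound -/

lemma family_bound [Fintype V] (r c p : ℕ) (hc : 1 ≤ c) (hp : 0 < p)
    (B : Fin p → Set V) (hfam : IsBallFamily G r c B) :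
    ((quotientGraph G B).edgeSet.ncard : ℝ)
      ≤ ((c : ℝ) + (((2*r+2) * c : ℕ) : ℝ)^2 * gradR r G) * p := by
  classical
  set d := gradR r G with hd
  have hd0 : 0 ≤ d := gradR_nonneg G r
  -- choose centers and geodesic walks
  choose xc hxcB hxw using fun i => ball_walks G (hfam.1 i).1 (hfam.1 i).2
  have v₀ : V := xc ⟨0, hp⟩
  -- complexity in terms of Finset cards
  have hcard : ∀ v : V, (Finset.univ.filter (fun i => v ∈ B i)).card ≤ c := by
    intro v
    have h1 := hfam.2 v
    rwa [Set.ncard_eq_toFinset_card', Set.toFinset_setOf] at h1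
  -- the edge finset
  have hEfin : (quotientGraph G B).edgeSet.Finite := Set.toFinite _
  set EF : Finset (Sym2 (Fin p)) := hEfin.toFinset with hEF
  have hEcard : (quotientGraph G B).edgeSet.ncard = EF.card :=
    Set.ncard_eq_toFinset_card _ hEfin
  -- canonical representatives of edges
  have hrep : ∀ e : Sym2 (Fin p), ∃ a : Fin p × Fin p, e = s(a.1, a.2) := by
    intro e
    induction e using Sym2.ind with
    | _ i j => exact ⟨(i, j), rfl⟩
  choose ab hab using hrep
  have hAdj : ∀ e ∈ EF, (quotientGraph G B).Adj (ab e).1 (ab e).2 := by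
    intro e he
    rw [hEF, Set.Finite.mem_toFinset] at he
    rw [hab e] at he
    exact he
  -- easy and hard edges
  set easyP : Sym2 (Fin p) → Prop := fun e => ∃ i j : Fin p, e = s(i, j) ∧ xc i ∈ B j
    with heasyP
  set easyF := EF.filter easyP with heasyF
  set hardF := EF.filter (fun e => ¬ easyP e) with hhardF
  have hsplit : easyF.card + hardF.card = EF.card :=
    Finset.card_filter_add_card_filter_not _
  -- the easy bound
  have heasy : easyF.card ≤ p * c := by
    have hchoice : ∀ e : Sym2 (Fin p), easyP e →
        ∃ q : Fin p × Fin p, e = s(q.1, q.2) ∧ xc q.1 ∈ B q.2 := by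
      rintro e ⟨i, j, h1, h2⟩; exact ⟨(i, j), h1, h2⟩
    set f : Sym2 (Fin p) → Fin p × Fin p := fun e =>
      if h : easyP e then (hchoice e h).choose else (⟨0, hp⟩, ⟨0, hp⟩) with hf
    have hfspec : ∀ e, easyP e → e = s((f e).1, (f e).2) ∧ xc (f e).1 ∈ B (f e).2 := by
      intro e h
      rw [hf]; simp only [dif_pos h]
      exact (hchoice e h).choose_spec
    have hmaps : ∀ e ∈ easyF,
        f e ∈ Finset.univ.filter (fun q : Fin p × Fin p => xc q.1 ∈ B q.2) := by
      intro e he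
      have h := (Finset.mem_filter.mp he).2
      exact Finset.mem_filter.mpr ⟨Finset.mem_univ _, (hfspec e h).2⟩
    have hinj : Set.InjOn f ↑easyF := by
      intro e1 h1 e2 h2 heq
      have s1 := (hfspec e1 (Finset.mem_filter.mp h1).2).1
      have s2 := (hfspec e2 (Finset.mem_filter.mp h2).2).1
      rw [s1, s2, heq]
    refine le_trans (Finset.card_le_card_of_injOn f hmaps hinj) ?_
    have hsub : Finset.univ.filter (fun q : Fin p × Fin p => xc q.1 ∈ B q.2)
        ⊆ Finset.univ.biUnion (fun i : Fin p =>
            ({i} : Finset (Fin p)) ×ˢ Finset.univ.filter (fun j => xc i ∈ B j)) := by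
      rintro ⟨i, j⟩ hq
      have h := (Finset.mem_filter.mp hq).2
      refine Finset.mem_biUnion.mpr ⟨i, Finset.mem_univ _, ?_⟩
      exact Finset.mem_product.mpr ⟨Finset.mem_singleton_self i,
        Finset.mem_filter.mpr ⟨Finset.mem_univ _, h⟩⟩
    refine le_trans (Finset.card_le_card hsub) ?_
    refine le_trans Finset.card_biUnion_le ?_
    have hbound : ∀ i : Fin p,
        (({i} : Finset (Fin p)) ×ˢ Finset.univ.filter (fun j => xc i ∈ B j)).card ≤ c := by
      intro i
      rw [Finset.card_product, Finset.card_singleton, one_mul]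
      exact hcard (xc i)
    calc ∑ i : Fin p, (({i} : Finset (Fin p)) ×ˢ Finset.univ.filter (fun j => xc i ∈ B j)).card
        ≤ ∑ _i : Fin p, c := Finset.sum_le_sum (fun i _ => hbound i)
      _ = p * c := by rw [Finset.sum_const, Finset.card_univ, Fintype.card_fin, smul_eq_mul]
  -- data for hard edges
  have hhdata : ∀ e ∈ hardF, ∃ u w : V, ∃ Q : G.Walk (xc (ab e).1) u,
      ∃ R : G.Walk (xc (ab e).2) w,
      (u = w ∨ G.Adj u w) ∧ Q.length ≤ r ∧ (∀ y ∈ Q.support, y ∈ B (ab e).1) ∧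
        R.length ≤ r ∧ (∀ y ∈ R.support, y ∈ B (ab e).2) := by
    intro e he
    rw [hhardF] at he
    have hadj := hAdj e (Finset.mem_of_mem_filter e he)
    rcases hadj.2 with ⟨v, hv1, hv2⟩ | ⟨u, hu, w, hw, huvw⟩
    · obtain ⟨Q, hQ1, hQ2⟩ := hxw (ab e).1 v hv1
      obtain ⟨R, hR1, hR2⟩ := hxw (ab e).2 v hv2
      exact ⟨v, v, Q, R, Or.inl rfl, hQ1, hQ2, hR1, hR2⟩
    · obtain ⟨Q, hQ1, hQ2⟩ := hxw (ab e).1 u hu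
      obtain ⟨R, hR1, hR2⟩ := hxw (ab e).2 w hw
      exact ⟨u, w, Q, R, Or.inr huvw, hQ1, hQ2, hR1, hR2⟩
  choose uu ww QQ RR hor hQlen hQsup hRlen hRsup using hhdata
  -- the union of the supports of the two canonical walks
  set SS : Sym2 (Fin p) → Set V := fun e =>
    if he : e ∈ hardF then {y | y ∈ (QQ e he).support ∨ y ∈ (RR e he).support} else ∅
    with hSS
  set TT : Sym2 (Fin p) → Finset (Fin p) := fun e =>
    Finset.univ.filter (fun t => (B t ∩ SS e).Nonempty) with hTT
  have hSSe : ∀ e (he : e ∈ hardF),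
      SS e = {y | y ∈ (QQ e he).support ∨ y ∈ (RR e he).support} := by
    intro e he; rw [hSS]; simp only [dif_pos he]
  have hTa : ∀ e (he : e ∈ hardF), (ab e).1 ∈ TT e := by
    intro e he
    rw [hTT]
    refine Finset.mem_filter.mpr ⟨Finset.mem_univ _, ⟨xc (ab e).1, ?_, ?_⟩⟩
    · exact hxcB (ab e).1
    · rw [hSSe e he]; exact Or.inl (QQ e he).start_mem_support
  have hTb : ∀ e (he : e ∈ hardF), (ab e).2 ∈ TT e := by
    intro e he
    rw [hTT]
    refine Finset.mem_filter.mpr ⟨Finset.mem_univ _, ⟨xc (ab e).2, ?_, ?_⟩⟩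
    · exact hxcB (ab e).2
    · rw [hSSe e he]; exact Or.inr (RR e he).start_mem_support
  have hTcard : ∀ e (he : e ∈ hardF), (TT e).card ≤ (2*r+2) * c := by
    intro e he
    have hsub : TT e ⊆ ((QQ e he).support.toFinset ∪ (RR e he).support.toFinset).biUnion
        (fun y => Finset.univ.filter (fun t => y ∈ B t)) := by
      intro t ht
      rw [hTT] at ht
      obtain ⟨y, hyB, hyS⟩ := (Finset.mem_filter.mp ht).2
      rw [hSSe e he] at hyS
      refine Finset.mem_biUnion.mpr ⟨y, ?_, Finset.mem_filter.mpr ⟨Finset.mem_univ _, hyB⟩⟩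
      rcases hyS with h | h
      · exact Finset.mem_union_left _ (List.mem_toFinset.mpr h)
      · exact Finset.mem_union_right _ (List.mem_toFinset.mpr h)
    refine le_trans (Finset.card_le_card hsub) ?_
    refine le_trans Finset.card_biUnion_le ?_
    refine le_trans (Finset.sum_le_sum (fun y _ => hcard y)) ?_
    rw [Finset.sum_const, smul_eq_mul]
    refine Nat.mul_le_mul_right _ (le_trans (Finset.card_union_le _ _) ?_)
    have h1 : (QQ e he).support.toFinset.card ≤ r + 1 := by
      refine le_trans (List.toFinset_card_le _) ?_
      rw [SimpleGraph.Walk.length_support]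
      have := hQlen e he; omega
    have h2 : (RR e he).support.toFinset.card ≤ r + 1 := by
      refine le_trans (List.toFinset_card_le _) ?_
      rw [SimpleGraph.Walk.length_support]
      have := hRlen e he; omega
    omega
  -- the goodness predicate
  obtain ⟨GoodP, hGoodP⟩ : ∃ Gp : Sym2 (Fin p) → Equiv.Perm (Fin p) → Prop,
      ∀ e σ, Gp e σ ↔ (σ.symm (ab e).1 < σ.symm (ab e).2 ∧
        ∀ t ∈ TT e, t ≠ (ab e).1 → t ≠ (ab e).2 → σ.symm (ab e).2 < σ.symm t) :=
    ⟨fun e σ => σ.symm (ab e).1 < σ.symm (ab e).2 ∧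
      ∀ t ∈ TT e, t ≠ (ab e).1 → t ≠ (ab e).2 → σ.symm (ab e).2 < σ.symm t,
      fun _ _ => Iff.rfl⟩
  -- per-edge count of good permutations
  have hcount : ∀ e (he : e ∈ hardF), Nat.factorial p ≤
      ((2*r+2)*c) * ((2*r+2)*c) *
        (Finset.univ.filter (fun σ : Equiv.Perm (Fin p) => GoodP e σ)).card := by
    intro e he
    have h1 := count_good (TT e) (hTa e he) (hTb e he) (hAdj e (Finset.mem_of_mem_filter e
      (by rw [hhardF] at he; exact he))).1 (GoodP e)
      (fun σ ha hb => (hGoodP e σ).mpr ⟨ha, hb⟩)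
    refine le_trans h1 (Nat.mul_le_mul_right _ (Nat.mul_le_mul (hTcard e he) (hTcard e he)))
  -- per-permutation bound via the carved family
  have hperσ : ∀ σ : Equiv.Perm (Fin p),
      ((hardF.filter (fun e => GoodP e σ)).card : ℝ) ≤ d * p := by
    intro σ
    set B' : ℕ → Set V := fun n => if h : n < p then B (σ ⟨n, h⟩) else ∅ with hB'
    set x' : ℕ → V := fun n => if h : n < p then xc (σ ⟨n, h⟩) else v₀ with hx'
    have hFamBall : IsBallFamily G r 1 (starFam G B' x' r p) :=
      starFam_isBallFamily G B' x' r p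
    have hmstar : ((quotientGraph G (starFam G B' x' r p)).edgeSet.ncard : ℝ) ≤ d * p := by
      rcases Nat.eq_zero_or_pos (svF G B' x' r p).card with hq0 | hqpos
      · have hempty : (quotientGraph G (starFam G B' x' r p)).edgeSet = ∅ := by
          apply Set.eq_empty_iff_forall_notMem.mpr
          intro e he
          induction e using Sym2.ind with
          | _ i j => have h := i.2; omega
        rw [hempty]
        simp only [Set.ncard_empty, Nat.cast_zero]
        positivity
      · have hmem : ((quotientGraph G (starFam G B' x' r p)).edgeSet.ncard : ℝ)
            / (((svF G B' x' r p).card : ℕ) : ℝ) ≤ d :=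
          le_gradR G r _ ⟨(svF G B' x' r p).card, starFam G B' x' r p, hFamBall, rfl⟩
        rw [div_le_iff₀ (by exact_mod_cast hqpos)] at hmem
        refine le_trans hmem ?_
        apply mul_le_mul_of_nonneg_left _ hd0
        exact_mod_cast svF_card_le G B' x' r p
    have hmain : ∀ e ∈ hardF.filter (fun e => GoodP e σ),
        ∃ y ∈ carve G B' x' r ((σ.symm (ab e).1 : Fin p) : ℕ),
          ∃ z ∈ carve G B' x' r ((σ.symm (ab e).2 : Fin p) : ℕ), G.Adj y z := by
      intro e he'
      obtain ⟨he, hgood⟩ := Finset.mem_filter.mp he'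
      obtain ⟨hg1, hg2⟩ := (hGoodP e σ).mp hgood
      have ha'lt : ((σ.symm (ab e).1 : Fin p) : ℕ) < p := (σ.symm (ab e).1).2
      have hb'lt : ((σ.symm (ab e).2 : Fin p) : ℕ) < p := (σ.symm (ab e).2).2
      have hxa : x' ((σ.symm (ab e).1 : Fin p) : ℕ) = xc (ab e).1 := by
        rw [hx']; simp only [dif_pos ha'lt, Fin.eta, Equiv.apply_symm_apply]
      have hxb2 : x' ((σ.symm (ab e).2 : Fin p) : ℕ) = xc (ab e).2 := by
        rw [hx']; simp only [dif_pos hb'lt, Fin.eta, Equiv.apply_symm_apply]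
      have hBa : B' ((σ.symm (ab e).1 : Fin p) : ℕ) = B (ab e).1 := by
        rw [hB']; simp only [dif_pos ha'lt, Fin.eta, Equiv.apply_symm_apply]
      have hBb : B' ((σ.symm (ab e).2 : Fin p) : ℕ) = B (ab e).2 := by
        rw [hB']; simp only [dif_pos hb'lt, Fin.eta, Equiv.apply_symm_apply]
      have hux : ¬ easyP e := (Finset.mem_filter.mp he).2
      have hxc2notin : xc (ab e).2 ∉ B (ab e).1 := fun hmem2 =>
        hux ⟨(ab e).2, (ab e).1, (hab e).trans Sym2.eq_swap, hmem2⟩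
      refine main_adj G B' x' r (S := SS e) ?_ ((QQ e he).copy hxa.symm rfl) ?_ ?_
        ((RR e he).copy hxb2.symm rfl) ?_ ?_ (hor e he) ?_ ?_
      · exact hg1
      · rw [SimpleGraph.Walk.length_copy]; exact hQlen e he
      · intro y hy
        rw [SimpleGraph.Walk.support_copy] at hy
        refine ⟨by rw [hBa]; exact hQsup e he y hy, by rw [hSSe e he]; exact Or.inl hy⟩
      · rw [SimpleGraph.Walk.length_copy]; exact hRlen e he
      · intro y hy
        rw [SimpleGraph.Walk.support_copy] at hy
        refine ⟨by rw [hBb]; exact hRsup e he y hy, by rw [hSSe e he]; exact Or.inr hy⟩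
      · intro t hlt hne v hvB hvS
        have htp : t < p := lt_trans hlt hb'lt
        rw [hB'] at hvB
        simp only [dif_pos htp] at hvB
        have hmemT : σ ⟨t, htp⟩ ∈ TT e := by
          rw [hTT]
          exact Finset.mem_filter.mpr ⟨Finset.mem_univ _, ⟨v, hvB, hvS⟩⟩
        by_cases h1 : σ ⟨t, htp⟩ = (ab e).1
        · apply hne
          have h4 : (⟨t, htp⟩ : Fin p) = σ.symm (ab e).1 := by
            rw [← h1, Equiv.symm_apply_apply]
          exact congrArg Fin.val h4
        · by_cases h2 : σ ⟨t, htp⟩ = (ab e).2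
          · have h4 : (⟨t, htp⟩ : Fin p) = σ.symm (ab e).2 := by
              rw [← h2, Equiv.symm_apply_apply]
            have h5 := congrArg Fin.val h4
            simp only [] at h5
            omega
          · have h3 := hg2 (σ ⟨t, htp⟩) hmemT h1 h2
            rw [Equiv.symm_apply_apply] at h3
            have h6 : ((σ.symm (ab e).2 : Fin p) : ℕ) < t := h3
            omega
      · rw [hxb2, hBa]; exact hxc2notin
    have hsv : ∀ e ∈ hardF.filter (fun e => GoodP e σ),
        ((σ.symm (ab e).1 : Fin p) : ℕ) ∈ svF G B' x' r p ∧
          ((σ.symm (ab e).2 : Fin p) : ℕ) ∈ svF G B' x' r p := by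
      intro e he
      obtain ⟨y, hy, z, hz, hadj⟩ := hmain e he
      constructor
      · exact Finset.mem_filter.mpr ⟨Finset.mem_range.mpr (σ.symm (ab e).1).2, ⟨y, hy⟩⟩
      · exact Finset.mem_filter.mpr ⟨Finset.mem_range.mpr (σ.symm (ab e).2).2, ⟨z, hz⟩⟩
    rcases Finset.eq_empty_or_nonempty (hardF.filter (fun e => GoodP e σ)) with hemp | ⟨e₀, he₀⟩
    · rw [hemp]; simp only [Finset.card_empty, Nat.cast_zero]; positivity
    · have hqpos : 0 < (svF G B' x' r p).card := Finset.card_pos.mpr ⟨_, (hsv e₀ he₀).1⟩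
      set iso := (svF G B' x' r p).orderIsoOfFin
        (rfl : (svF G B' x' r p).card = (svF G B' x' r p).card) with hiso
      set g : Sym2 (Fin p) → Sym2 (Fin ((svF G B' x' r p).card)) := fun e =>
        if h : ((σ.symm (ab e).1 : Fin p) : ℕ) ∈ svF G B' x' r p ∧
            ((σ.symm (ab e).2 : Fin p) : ℕ) ∈ svF G B' x' r p
        then s(iso.symm ⟨_, h.1⟩, iso.symm ⟨_, h.2⟩)
        else s(⟨0, hqpos⟩, ⟨0, hqpos⟩) with hg
      have hgspec : ∀ e (h : ((σ.symm (ab e).1 : Fin p) : ℕ) ∈ svF G B' x' r p ∧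
          ((σ.symm (ab e).2 : Fin p) : ℕ) ∈ svF G B' x' r p),
          g e = s(iso.symm ⟨_, h.1⟩, iso.symm ⟨_, h.2⟩) := by
        intro e h; rw [hg]; simp only [dif_pos h]
      have hstarval : ∀ (n : ℕ) (hn : n ∈ svF G B' x' r p),
          starFam G B' x' r p (iso.symm ⟨n, hn⟩) = carve G B' x' r n := by
        intro n hn
        rw [starFam_apply, ← hiso, OrderIso.apply_symm_apply]
      have hEfin2 : (quotientGraph G (starFam G B' x' r p)).edgeSet.Finite := Set.toFinite _
      have hmaps : ∀ e ∈ hardF.filter (fun e => GoodP e σ), g e ∈ hEfin2.toFinset := by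
        intro e he
        obtain ⟨y, hy, z, hz, hadj⟩ := hmain e he
        have h := hsv e he
        rw [hgspec e h, Set.Finite.mem_toFinset, SimpleGraph.mem_edgeSet]
        have hg1 := ((hGoodP e σ).mp (Finset.mem_filter.mp he).2).1
        constructor
        · intro heq
          have h4 : (⟨((σ.symm (ab e).1 : Fin p) : ℕ), h.1⟩ : {x // x ∈ svF G B' x' r p})
              = ⟨((σ.symm (ab e).2 : Fin p) : ℕ), h.2⟩ := iso.symm.injective heq
          have h5 := congrArg Subtype.val h4
          simp only [] at h5
          have h6 : ((σ.symm (ab e).1 : Fin p) : ℕ) < ((σ.symm (ab e).2 : Fin p) : ℕ) := hg1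
          omega
        · refine Or.inr ⟨y, ?_, z, ?_, hadj⟩
          · rw [hstarval _ h.1]; exact hy
          · rw [hstarval _ h.2]; exact hz
      have hinj : Set.InjOn g ↑(hardF.filter (fun e => GoodP e σ)) := by
        intro e1 he1 e2 he2 heq
        have h1 := hsv e1 he1
        have h2 := hsv e2 he2
        rw [hgspec e1 h1, hgspec e2 h2] at heq
        have hval : ∀ (m n : ℕ) (hm : m ∈ svF G B' x' r p) (hn : n ∈ svF G B' x' r p),
            iso.symm ⟨m, hm⟩ = iso.symm ⟨n, hn⟩ → m = n := by
          intro m n hm hn hmn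
          exact congrArg Subtype.val (iso.symm.injective hmn)
        have hfin : ∀ (i j : Fin p), (i : ℕ) = (j : ℕ) → i = j := fun i j => Fin.ext
        rcases Sym2.eq_iff.mp heq with ⟨hA, hB⟩ | ⟨hA, hB⟩
        · have e11 : (ab e1).1 = (ab e2).1 := by
            have := hfin _ _ (hval _ _ _ _ hA)
            exact σ.symm.injective this
          have e12 : (ab e1).2 = (ab e2).2 := by
            have := hfin _ _ (hval _ _ _ _ hB)
            exact σ.symm.injective this
          rw [hab e1, hab e2, e11, e12]
        · have e11 : (ab e1).1 = (ab e2).2 := by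
            have := hfin _ _ (hval _ _ _ _ hA)
            exact σ.symm.injective this
          have e12 : (ab e1).2 = (ab e2).1 := by
            have := hfin _ _ (hval _ _ _ _ hB)
            exact σ.symm.injective this
          rw [hab e1, hab e2, e11, e12, Sym2.eq_swap]
      have hcount2 := Finset.card_le_card_of_injOn g hmaps hinj
      rw [← Set.ncard_eq_toFinset_card _ hEfin2] at hcount2
      calc ((hardF.filter (fun e => GoodP e σ)).card : ℝ)
          ≤ ((quotientGraph G (starFam G B' x' r p)).edgeSet.ncard : ℝ) := by
            exact_mod_cast hcount2
        _ ≤ d * p := hmstar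
  -- double counting
  have hdouble : (hardF.card : ℝ) ≤ (((2*r+2)*c : ℕ) : ℝ)^2 * (d * p) := by
    have hswap : ∑ σ : Equiv.Perm (Fin p), (hardF.filter (fun e => GoodP e σ)).card
        = ∑ e ∈ hardF, (Finset.univ.filter (fun σ => GoodP e σ)).card := by
      simp only [Finset.card_filter]
      rw [Finset.sum_comm]
    have hnat : hardF.card * Nat.factorial p ≤
        ((2*r+2)*c) * ((2*r+2)*c) *
          ∑ σ : Equiv.Perm (Fin p), (hardF.filter (fun e => GoodP e σ)).card := by
      rw [hswap, Finset.mul_sum]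
      calc hardF.card * Nat.factorial p = ∑ _e ∈ hardF, Nat.factorial p := by
            rw [Finset.sum_const, smul_eq_mul]
        _ ≤ ∑ e ∈ hardF, ((2*r+2)*c) * ((2*r+2)*c) *
              (Finset.univ.filter (fun σ => GoodP e σ)).card :=
            Finset.sum_le_sum (fun e he => hcount e he)
    have hsum : (∑ σ : Equiv.Perm (Fin p),
        ((hardF.filter (fun e => GoodP e σ)).card : ℝ)) ≤ (Nat.factorial p : ℝ) * (d * p) := by
      calc ∑ σ : Equiv.Perm (Fin p), ((hardF.filter (fun e => GoodP e σ)).card : ℝ)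
          ≤ ∑ _σ : Equiv.Perm (Fin p), d * p := Finset.sum_le_sum (fun σ _ => hperσ σ)
        _ = (Fintype.card (Equiv.Perm (Fin p)) : ℝ) * (d * p) := by
            rw [Finset.sum_const, Finset.card_univ, nsmul_eq_mul]
        _ = (Nat.factorial p : ℝ) * (d * p) := by rw [Fintype.card_perm, Fintype.card_fin]
    set M : ℕ := (2*r+2)*c with hM
    have h2 : (hardF.card : ℝ) * (Nat.factorial p : ℝ) ≤
        ((M:ℝ) * M * (d * p)) * (Nat.factorial p : ℝ) := by
      calc (hardF.card : ℝ) * (Nat.factorial p : ℝ)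
          = ((hardF.card * Nat.factorial p : ℕ) : ℝ) := by push_cast; ring
        _ ≤ ((M * M * ∑ σ : Equiv.Perm (Fin p),
              (hardF.filter (fun e => GoodP e σ)).card : ℕ) : ℝ) := Nat.cast_le.mpr hnat
        _ = (M:ℝ) * M * ∑ σ : Equiv.Perm (Fin p),
              ((hardF.filter (fun e => GoodP e σ)).card : ℝ) := by push_cast; ring
        _ ≤ (M:ℝ) * M * ((Nat.factorial p : ℝ) * (d * p)) := by
            apply mul_le_mul_of_nonneg_left hsum (by positivity)
        _ = ((M:ℝ) * M * (d * p)) * (Nat.factorial p : ℝ) := by ring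
    have hfac : (0:ℝ) < (Nat.factorial p : ℝ) := by exact_mod_cast Nat.factorial_pos p
    have h3 := le_of_mul_le_mul_right h2 hfac
    calc (hardF.card : ℝ) ≤ (M:ℝ) * M * (d * p) := h3
      _ = ((M : ℕ) : ℝ)^2 * (d * p) := by ring
  -- final arithmetic
  rw [hEcard]
  have heasy' : ((easyF.card : ℝ)) ≤ (p : ℝ) * c := by exact_mod_cast heasy
  have : (EF.card : ℝ) = (easyF.card : ℝ) + hardF.card := by exact_mod_cast hsplit.symm
  rw [this]
  calc (easyF.card : ℝ) + hardF.card ≤ (p : ℝ) * c + (((2*r+2)*c : ℕ) : ℝ)^2 * (d * p) := by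
        exact add_le_add heasy' hdouble
    _ = ((c : ℝ) + (((2*r+2) * c : ℕ) : ℝ)^2 * d) * p := by push_cast; ring

end BEaux

/-- `∇^c_r(G)` is polynomially bounded in `c` and `∇_r(G)`. -/
theorem stmt11 (r : ℕ) :
    ∃ P : MvPolynomial (Fin 2) ℝ,
      ∀ (V : Type) [Fintype V], ∀ G : SimpleGraph V, ∀ c : ℕ, 1 ≤ c →
        gradCR c r G ≤ MvPolynomial.eval ![(c : ℝ), gradR r G] P := by
  classical
  refine ⟨MvPolynomial.X 0 + MvPolynomial.C (((2*r+2) : ℝ)^2) * (MvPolynomial.X 0)^2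
    * MvPolynomial.X 1, ?_⟩
  intro V _ G c hc
  have heval : MvPolynomial.eval ![(c : ℝ), gradR r G]
      ((MvPolynomial.X 0 + MvPolynomial.C (((2*r+2) : ℝ)^2) * (MvPolynomial.X 0)^2
        * MvPolynomial.X 1 : MvPolynomial (Fin 2) ℝ))
      = (c : ℝ) + ((2*r+2 : ℝ))^2 * (c:ℝ)^2 * gradR r G := by
    simp [Matrix.cons_val_zero, Matrix.cons_val_one, Matrix.head_cons]
  rw [heval]
  have hd0 : 0 ≤ gradR r G := BEaux.gradR_nonneg G r
  have hc0 : (1:ℝ) ≤ (c:ℝ) := by exact_mod_cast hc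
  have hrhs : (0:ℝ) ≤ (c : ℝ) + ((2*r+2 : ℝ))^2 * (c:ℝ)^2 * gradR r G := by
    have h1 : (0:ℝ) ≤ ((2*r+2 : ℝ))^2 * (c:ℝ)^2 * gradR r G :=
      mul_nonneg (by positivity) hd0
    linarith
  unfold gradCR
  apply Real.sSup_le _ hrhs
  rintro x ⟨p, B, hfam, rfl⟩
  rcases Nat.eq_zero_or_pos p with rfl | hp
  · simp only [Nat.cast_zero, div_zero]; exact hrhs
  · rw [div_le_iff₀ (by exact_mod_cast hp)]
    refine le_trans (BEaux.family_bound G r c p hc hp B hfam) (le_of_eq ?_)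
    push_cast
    ring
end
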